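/- For every integer k ≥ 2 and every α > 0, there exists δ = δ(α,k) > 0 such that the following holds. Let n ∈ ℕ, let ℱ ⊆ 𝒫(n) satisfy |ℱ| ≥ (k−1+α)·C(n,⌊n/2⌋), and suppose m is a real number with δ^{−1} ≤ m ≤ C(|F|,|G|) for every F, G ∈ ℱ with F ⊋ G. If ℋ is a k-uniform hypergraph with vertex set ℱ, all of whose edges are k-chains, satisfying (a) e(ℋ) ≤ δ^k·m^{k−1}·C(n,⌊n/2⌋) and (b) Δ_ℓ(ℋ) ≤ (δm)^{k−ℓ} for every 1 ≤ ℓ ≤ k, then there exists a k-chain f of sets from ℱ which is not an edge of ℋ such that the hypergraph ℋ with the edge f added still satisfies Δ_ℓ({f} ∪ ℋ) ≤ (δm)^{k−ℓ} for every 1 ≤ ℓ ≤ k. -/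

import Mathlib

open Finset

/-- A `k`-chain: `k` distinct sets totally ordered by strict inclusion. -/
def IsKChain {n : ℕ} (k : ℕ) (𝒞 : Finset (Finset (Fin n))) : Prop :=
  𝒞.card = k ∧ IsChain (· ⊂ ·) (𝒞 : Set (Finset (Fin n)))

/-- A family contains no `k`-chain. -/
def NoKChain {n : ℕ} (k : ℕ) (𝒜 : Finset (Finset (Fin n))) : Prop :=
  ∀ 𝒞 ⊆ 𝒜, ¬ IsKChain k 𝒞

attribute [local instance] Classical.propDecidable
namespace S6
variable {n : ℕ}

def FinChain (𝒜 : Finset (Finset (Fin n))) : Prop :=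
  ∀ F ∈ 𝒜, ∀ G ∈ 𝒜, F ≠ G → F ⊂ G ∨ G ⊂ F

lemma FinChain.card_inj {𝒜 : Finset (Finset (Fin n))} (hc : FinChain 𝒜)
    {F G : Finset (Fin n)} (hF : F ∈ 𝒜) (hG : G ∈ 𝒜) (hcard : F.card = G.card) : F = G := by
  by_contra hne
  rcases hc F hF G hG hne with h | h
  · exact absurd hcard (Nat.ne_of_lt (Finset.card_lt_card h))
  · exact absurd hcard.symm (Nat.ne_of_lt (Finset.card_lt_card h))

lemma FinChain.subset_iff_card {𝒜 : Finset (Finset (Fin n))} (hc : FinChain 𝒜)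
    {F G : Finset (Fin n)} (hF : F ∈ 𝒜) (hG : G ∈ 𝒜) : F ⊆ G ↔ F.card ≤ G.card := by
  constructor
  · exact Finset.card_le_card
  · intro hle
    by_cases hne : F = G
    · exact hne ▸ Finset.Subset.refl F
    · rcases hc F hF G hG hne with h | h
      · exact h.subset
      · exact absurd (Finset.card_lt_card h) (by omega)

noncomputable def rk (𝒜 : Finset (Finset (Fin n))) (x : Fin n) : ℕ :=
  (𝒜.filter (fun F => x ∈ F)).card

noncomputable def upc (𝒜 : Finset (Finset (Fin n))) (F : Finset (Fin n)) : ℕ :=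
  (𝒜.filter (fun G => F ⊆ G)).card

lemma upc_pos {𝒜 : Finset (Finset (Fin n))} {F : Finset (Fin n)} (hF : F ∈ 𝒜) :
    1 ≤ upc 𝒜 F :=
  Finset.card_pos.2 ⟨F, Finset.mem_filter.2 ⟨hF, Finset.Subset.refl F⟩⟩

lemma upc_anti {𝒜 : Finset (Finset (Fin n))} {F G : Finset (Fin n)}
    (h : F ⊆ G) : upc 𝒜 G ≤ upc 𝒜 F := by
  apply Finset.card_le_card
  intro K hK
  rw [Finset.mem_filter] at hK ⊢
  exact ⟨hK.1, h.trans hK.2⟩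

lemma upc_strict_anti {𝒜 : Finset (Finset (Fin n))} (hc : FinChain 𝒜)
    {F G : Finset (Fin n)} (hF : F ∈ 𝒜) (hG : G ∈ 𝒜) (h : F ⊂ G) :
    upc 𝒜 G < upc 𝒜 F := by
  apply Finset.card_lt_card
  constructor
  · intro K hK
    rw [Finset.mem_filter] at hK ⊢
    exact ⟨hK.1, h.subset.trans hK.2⟩
  · intro hsub
    have hFmem : F ∈ 𝒜.filter (fun K => F ⊆ K) :=
      Finset.mem_filter.2 ⟨hF, Finset.Subset.refl F⟩
    have := Finset.mem_filter.1 (hsub hFmem)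
    exact absurd (this.2) (by
      intro hGF
      exact h.not_subset hGF)

lemma rank_eq_upc_min {𝒜 : Finset (Finset (Fin n))} (hc : FinChain 𝒜) {x : Fin n}
    (hne : (𝒜.filter (fun F => x ∈ F)).Nonempty) :
    ∃ Fm ∈ 𝒜, x ∈ Fm ∧ rk 𝒜 x = upc 𝒜 Fm ∧ ∀ G ∈ 𝒜, x ∈ G → Fm ⊆ G := by
  obtain ⟨Fm, hFm, hmin⟩ := Finset.exists_min_image _ Finset.card hne
  rw [Finset.mem_filter] at hFm
  have hsub : ∀ G ∈ 𝒜, x ∈ G → Fm ⊆ G := by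
    intro G hG hxG
    rw [hc.subset_iff_card hFm.1 hG]
    exact hmin G (Finset.mem_filter.2 ⟨hG, hxG⟩)
  refine ⟨Fm, hFm.1, hFm.2, ?_, hsub⟩
  unfold rk upc
  congr 1
  apply Finset.filter_congr
  intro G hG
  constructor
  · intro hxG; exact hsub G hG hxG
  · intro hFG; exact hFG hFm.2

lemma mem_iff_upc_le_rank {𝒜 : Finset (Finset (Fin n))} (hc : FinChain 𝒜)
    {F : Finset (Fin n)} (hF : F ∈ 𝒜) (x : Fin n) :
    x ∈ F ↔ upc 𝒜 F ≤ rk 𝒜 x := by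
  constructor
  · intro hx
    apply Finset.card_le_card
    intro G hG
    rw [Finset.mem_filter] at hG ⊢
    exact ⟨hG.1, hG.2 hx⟩
  · intro hle
    have hne : (𝒜.filter (fun G => x ∈ G)).Nonempty := by
      rw [← Finset.card_pos]
      calc 1 ≤ upc 𝒜 F := upc_pos hF
        _ ≤ rk 𝒜 x := hle
    obtain ⟨Fm, hFm, hxFm, hrk, hmin⟩ := rank_eq_upc_min hc hne
    have hFmF : Fm ⊆ F := by
      by_contra hnsub
      have hFFm : F ⊂ Fm := by
        rcases eq_or_ne F Fm with h | h
        · exact absurd (h ▸ Finset.Subset.refl F) hnsub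
        · rcases hc F hF Fm hFm h with h2 | h2
          · exact h2
          · exact absurd h2.subset hnsub
      have := upc_strict_anti hc hF hFm hFFm
      omega
    exact hFmF hxFm

lemma upc_eq_profile {𝒜 : Finset (Finset (Fin n))} (hc : FinChain 𝒜)
    {F : Finset (Fin n)} (hF : F ∈ 𝒜) :
    upc 𝒜 F = ((𝒜.image Finset.card).filter (fun a => F.card ≤ a)).card := by
  unfold upc
  have h1 : 𝒜.filter (fun G => F ⊆ G) = 𝒜.filter (fun G => F.card ≤ G.card) := by
    apply Finset.filter_congr
    intro G hG
    simp only [hc.subset_iff_card hF hG]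
  rw [h1]
  have h2 : (𝒜.filter (fun G => F.card ≤ G.card)).image Finset.card
      = (𝒜.image Finset.card).filter (fun a => F.card ≤ a) := by
    ext a
    simp only [Finset.mem_image, Finset.mem_filter]
    constructor
    · rintro ⟨G, hG, rfl⟩
      exact ⟨⟨G, hG.1, rfl⟩, hG.2⟩
    · rintro ⟨⟨G, hG, rfl⟩, hle⟩
      exact ⟨G, ⟨hG, hle⟩, rfl⟩
  rw [← h2]
  rw [Finset.card_image_of_injOn]
  intro G hG K hK hcard
  simp only [Finset.coe_filter, Set.mem_setOf_eq] at hG hK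
  exact hc.card_inj hG.1 hK.1 hcard


lemma rankGE_card_eq {𝒜 ℬ : Finset (Finset (Fin n))} (hA : FinChain 𝒜) (hB : FinChain ℬ)
    (hP : 𝒜.image Finset.card = ℬ.image Finset.card) (i : ℕ) (hi : 1 ≤ i) :
    (Finset.univ.filter (fun x => i ≤ rk 𝒜 x)).card
      = (Finset.univ.filter (fun x => i ≤ rk ℬ x)).card := by
  -- the filtered chain of sets with upc ≥ i, and its image profile
  have key : ∀ (𝒞 : Finset (Finset (Fin n))), FinChain 𝒞 →
      (𝒞.filter (fun F => i ≤ upc 𝒞 F)).image Finset.card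
        = (𝒞.image Finset.card).filter
            (fun a => i ≤ ((𝒞.image Finset.card).filter (fun b => a ≤ b)).card) := by
    intro 𝒞 hc
    ext a
    simp only [Finset.mem_image, Finset.mem_filter]
    constructor
    · rintro ⟨F, hF, rfl⟩
      refine ⟨⟨F, hF.1, rfl⟩, ?_⟩
      rw [← upc_eq_profile hc hF.1]
      exact hF.2
    · rintro ⟨⟨F, hF, rfl⟩, hle⟩
      refine ⟨F, ⟨hF, ?_⟩, rfl⟩
      rw [upc_eq_profile hc hF]
      exact hle
  -- the superlevel set of rk equals the largest set with upc ≥ i (if any)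
  have main : ∀ (𝒞 : Finset (Finset (Fin n))), FinChain 𝒞 →
      ∀ Fmax ∈ 𝒞.filter (fun F => i ≤ upc 𝒞 F),
      (∀ G ∈ 𝒞.filter (fun F => i ≤ upc 𝒞 F), G.card ≤ Fmax.card) →
      Finset.univ.filter (fun x => i ≤ rk 𝒞 x) = Fmax := by
    intro 𝒞 hc Fmax hFmax hmax
    rw [Finset.mem_filter] at hFmax
    ext x
    simp only [Finset.mem_filter, Finset.mem_univ, true_and]
    constructor
    · intro hx
      have hne : (𝒞.filter (fun F => x ∈ F)).Nonempty := by
        rw [← Finset.card_pos]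
        have : 1 ≤ rk 𝒞 x := le_trans hi hx
        exact this
      obtain ⟨Fm, hFm, hxFm, hrk, hmin⟩ := rank_eq_upc_min hc hne
      have hFmK : Fm ∈ 𝒞.filter (fun F => i ≤ upc 𝒞 F) :=
        Finset.mem_filter.2 ⟨hFm, by omega⟩
      have : Fm ⊆ Fmax := by
        rw [hc.subset_iff_card hFm hFmax.1]
        exact hmax Fm hFmK
      exact this hxFm
    · intro hx
      calc i ≤ upc 𝒞 Fmax := hFmax.2
        _ ≤ rk 𝒞 x := (mem_iff_upc_le_rank hc hFmax.1 x).1 hx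
  -- case analysis on emptiness
  set K𝒜 := 𝒜.filter (fun F => i ≤ upc 𝒜 F) with hK𝒜
  set Kℬ := ℬ.filter (fun F => i ≤ upc ℬ F) with hKℬ
  have himg : K𝒜.image Finset.card = Kℬ.image Finset.card := by
    rw [hK𝒜, hKℬ, key 𝒜 hA, key ℬ hB, hP]
  by_cases hne : K𝒜.Nonempty
  · have hneB : Kℬ.Nonempty := by
      obtain ⟨F, hF⟩ := hne
      have : F.card ∈ Kℬ.image Finset.card := by
        rw [← himg]; exact Finset.mem_image_of_mem _ hF
      obtain ⟨G, hG, -⟩ := Finset.mem_image.1 this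
      exact ⟨G, hG⟩
    obtain ⟨FmaxA, hFmaxA, hmaxA⟩ := Finset.exists_max_image K𝒜 Finset.card hne
    obtain ⟨FmaxB, hFmaxB, hmaxB⟩ := Finset.exists_max_image Kℬ Finset.card hneB
    rw [main 𝒜 hA FmaxA hFmaxA hmaxA, main ℬ hB FmaxB hFmaxB hmaxB]
    -- their cards are equal: both are max of the same image
    have h1 : FmaxA.card ∈ Kℬ.image Finset.card := by
      rw [← himg]; exact Finset.mem_image_of_mem _ hFmaxA
    have h2 : FmaxB.card ∈ K𝒜.image Finset.card := by
      rw [himg]; exact Finset.mem_image_of_mem _ hFmaxB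
    obtain ⟨G1, hG1, hG1c⟩ := Finset.mem_image.1 h1
    obtain ⟨G2, hG2, hG2c⟩ := Finset.mem_image.1 h2
    have := hmaxB G1 hG1
    have := hmaxA G2 hG2
    omega
  · have hneB : ¬ Kℬ.Nonempty := by
      intro hB'
      obtain ⟨F, hF⟩ := hB'
      apply hne
      have : F.card ∈ K𝒜.image Finset.card := by
        rw [himg]; exact Finset.mem_image_of_mem _ hF
      obtain ⟨G, hG, -⟩ := Finset.mem_image.1 this
      exact ⟨G, hG⟩
    -- both superlevel sets are empty
    have empt : ∀ (𝒞 : Finset (Finset (Fin n))), FinChain 𝒞 →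
        ¬ (𝒞.filter (fun F => i ≤ upc 𝒞 F)).Nonempty →
        Finset.univ.filter (fun x => i ≤ rk 𝒞 x) = ∅ := by
      intro 𝒞 hc hemp
      rw [Finset.eq_empty_iff_forall_notMem]
      intro x hx
      simp only [Finset.mem_filter, Finset.mem_univ, true_and] at hx
      have hne2 : (𝒞.filter (fun F => x ∈ F)).Nonempty := by
        rw [← Finset.card_pos]
        have : (1:ℕ) ≤ rk 𝒞 x := le_trans hi hx
        exact this
      obtain ⟨Fm, hFm, hxFm, hrk, -⟩ := rank_eq_upc_min hc hne2
      exact hemp ⟨Fm, Finset.mem_filter.2 ⟨hFm, by omega⟩⟩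
    rw [empt 𝒜 hA hne, empt ℬ hB hneB]

lemma rank_fiber_card_eq {𝒜 ℬ : Finset (Finset (Fin n))} (hA : FinChain 𝒜) (hB : FinChain ℬ)
    (hP : 𝒜.image Finset.card = ℬ.image Finset.card) (i : ℕ) :
    (Finset.univ.filter (fun x => rk 𝒜 x = i)).card
      = (Finset.univ.filter (fun x => rk ℬ x = i)).card := by
  have split : ∀ (𝒞 : Finset (Finset (Fin n))) (j : ℕ),
      Finset.univ.filter (fun x : Fin n => rk 𝒞 x = j)
        = Finset.univ.filter (fun x => j ≤ rk 𝒞 x) \ Finset.univ.filter (fun x => j+1 ≤ rk 𝒞 x) := by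
    intro 𝒞 j
    ext x
    simp only [Finset.mem_filter, Finset.mem_sdiff, Finset.mem_univ, true_and]
    omega
  have hsub : ∀ (𝒞 : Finset (Finset (Fin n))) (j : ℕ),
      Finset.univ.filter (fun x : Fin n => j+1 ≤ rk 𝒞 x)
        ⊆ Finset.univ.filter (fun x => j ≤ rk 𝒞 x) := by
    intro 𝒞 j x hx
    simp only [Finset.mem_filter, Finset.mem_univ, true_and] at hx ⊢
    omega
  rw [split, split, Finset.card_sdiff_of_subset (hsub _ _), Finset.card_sdiff_of_subset (hsub _ _)]
  rcases Nat.eq_zero_or_pos i with rfl | hi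
  · have h0 : ∀ (𝒞 : Finset (Finset (Fin n))),
        Finset.univ.filter (fun x : Fin n => 0 ≤ rk 𝒞 x) = Finset.univ := by
      intro 𝒞; apply Finset.filter_true_of_mem; intro x _; omega
    rw [h0, h0, rankGE_card_eq hA hB hP 1 le_rfl]
  · rw [rankGE_card_eq hA hB hP i hi, rankGE_card_eq hA hB hP (i+1) (by omega)]

lemma exists_pi {𝒜 ℬ : Finset (Finset (Fin n))} (hA : FinChain 𝒜) (hB : FinChain ℬ)
    (hP : 𝒜.image Finset.card = ℬ.image Finset.card) :
    ∃ π : Equiv.Perm (Fin n), ∀ F ∈ 𝒜, ∀ F' ∈ ℬ, F.card = F'.card →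
      ∀ x : Fin n, x ∈ F ↔ π x ∈ F' := by
  have hcards : ∀ i, Fintype.card {x : Fin n // rk 𝒜 x = i} = Fintype.card {x : Fin n // rk ℬ x = i} := by
    intro i
    rw [Fintype.card_subtype, Fintype.card_subtype]
    exact rank_fiber_card_eq hA hB hP i
  set e : ∀ i, {x : Fin n // rk 𝒜 x = i} ≃ {x : Fin n // rk ℬ x = i} :=
    fun i => Fintype.equivOfCardEq (hcards i) with he
  set π : Equiv.Perm (Fin n) :=
    ((Equiv.sigmaFiberEquiv (rk 𝒜)).symm.trans
      ((Equiv.sigmaCongrRight e).trans (Equiv.sigmaFiberEquiv (rk ℬ)))) with hπ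
  have hrk : ∀ x, rk ℬ (π x) = rk 𝒜 x := by
    intro x
    have h1 : (Equiv.sigmaFiberEquiv (rk 𝒜)).symm x = ⟨rk 𝒜 x, ⟨x, rfl⟩⟩ := rfl
    rw [hπ]
    simp only [Equiv.trans_apply, h1, Equiv.sigmaCongrRight_apply]
    exact (e (rk 𝒜 x) ⟨x, rfl⟩).2
  refine ⟨π, ?_⟩
  intro F hF F' hF' hcard x
  rw [mem_iff_upc_le_rank hA hF x, mem_iff_upc_le_rank hB hF' (π x), hrk]
  have : upc 𝒜 F = upc ℬ F' := by
    rw [upc_eq_profile hA hF, upc_eq_profile hB hF', hP, hcard]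
  rw [this]


def pref (σ : Equiv.Perm (Fin n)) (F : Finset (Fin n)) : Prop :=
  ∀ q : Fin n, (q : ℕ) < F.card ↔ σ q ∈ F

def AP (σ : Equiv.Perm (Fin n)) (𝒜 : Finset (Finset (Fin n))) : Prop :=
  ∀ F ∈ 𝒜, pref σ F

noncomputable def cfun (𝒜 : Finset (Finset (Fin n))) : ℕ :=
  (Finset.univ.filter (fun σ : Equiv.Perm (Fin n) => AP σ 𝒜)).card

noncomputable def cnt (v : Finset (Fin n)) : ℕ :=
  (Finset.univ.filter (fun σ : Equiv.Perm (Fin n) => pref σ v)).card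

lemma pref_trans {σ π : Equiv.Perm (Fin n)} {F F' : Finset (Fin n)}
    (h : pref σ F) (hπ : ∀ x, x ∈ F ↔ π x ∈ F') (hcard : F.card = F'.card) :
    pref (σ.trans π) F' := by
  intro q
  rw [Equiv.trans_apply, ← hπ, ← hcard]
  exact h q

lemma pref_unique {σ : Equiv.Perm (Fin n)} {F F' : Finset (Fin n)}
    (h : pref σ F) (h' : pref σ F') (hcard : F.card = F'.card) : F = F' := by
  ext x
  have e1 := h (σ.symm x); have e2 := h' (σ.symm x)
  rw [Equiv.apply_symm_apply] at e1 e2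
  rw [← e1, ← e2, hcard]

lemma pref_mono {σ : Equiv.Perm (Fin n)} {F G : Finset (Fin n)}
    (hF : pref σ F) (hG : pref σ G) (h : F.card ≤ G.card) : F ⊆ G := by
  intro x hx
  have e1 := (hF (σ.symm x)); have e2 := (hG (σ.symm x))
  rw [Equiv.apply_symm_apply] at e1 e2
  exact e2.1 (lt_of_lt_of_le (e1.2 hx) h)

/-- equal counts for prefixes of equal size -/
lemma cnt_eq_of_card_eq {K v : Finset (Fin n)} (h : K.card = v.card) : cnt K = cnt v := by
  have hchainK : FinChain ({K} : Finset (Finset (Fin n))) := by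
    intro F hF G hG hne
    simp only [Finset.mem_singleton] at hF hG
    exact absurd (hF.trans hG.symm) hne
  have hchainV : FinChain ({v} : Finset (Finset (Fin n))) := by
    intro F hF G hG hne
    simp only [Finset.mem_singleton] at hF hG
    exact absurd (hF.trans hG.symm) hne
  have hprof : ({K} : Finset (Finset (Fin n))).image Finset.card = ({v} : Finset (Finset (Fin n))).image Finset.card := by
    simp [h]
  obtain ⟨π, hπ⟩ := exists_pi hchainK hchainV hprof
  have hπKv : ∀ x, x ∈ K ↔ π x ∈ v :=
    hπ K (Finset.mem_singleton_self K) v (Finset.mem_singleton_self v) h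
  unfold cnt
  apply Finset.card_bij (fun σ _ => σ.trans π)
  · intro σ hσ
    simp only [Finset.mem_filter, Finset.mem_univ, true_and] at hσ ⊢
    exact pref_trans hσ hπKv h
  · intro σ1 h1 σ2 h2 heq
    have : ∀ q, σ1 q = σ2 q := by
      intro q
      have := congrArg (fun τ : Equiv.Perm (Fin n) => τ q) heq
      simp only [Equiv.trans_apply] at this
      exact π.injective this
    exact Equiv.ext this
  · intro τ hτ
    refine ⟨τ.trans π.symm, ?_, ?_⟩
    · simp only [Finset.mem_filter, Finset.mem_univ, true_and] at hτ ⊢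
      have hπ' : ∀ x, x ∈ v ↔ π.symm x ∈ K := by
        intro x
        rw [hπKv (π.symm x), Equiv.apply_symm_apply]
      exact pref_trans hτ hπ' h.symm
    · apply Equiv.ext
      intro q
      simp [Equiv.trans_apply]

lemma card_prefFin (j : ℕ) (hj : j ≤ n) :
    ((Finset.univ : Finset (Fin n)).filter (fun q : Fin n => (q : ℕ) < j)).card = j := by
  have himg : ((Finset.univ : Finset (Fin n)).filter (fun q : Fin n => (q : ℕ) < j)).image Fin.val
      = Finset.range j := by
    ext a
    simp only [Finset.mem_image, Finset.mem_filter, Finset.mem_univ, true_and, Finset.mem_range]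
    constructor
    · rintro ⟨q, hq, rfl⟩; exact hq
    · intro ha
      exact ⟨⟨a, lt_of_lt_of_le ha hj⟩, ha, rfl⟩
  have := Finset.card_image_of_injOn (f := Fin.val)
    (s := (Finset.univ : Finset (Fin n)).filter (fun q : Fin n => (q : ℕ) < j))
    (fun a _ b _ hab => Fin.val_injective hab)
  rw [himg] at this
  rw [← this, Finset.card_range]

noncomputable def prefSet (σ : Equiv.Perm (Fin n)) (j : ℕ) : Finset (Fin n) :=
  Finset.univ.filter (fun x => ((σ.symm x : Fin n) : ℕ) < j)

lemma prefSet_card (σ : Equiv.Perm (Fin n)) (j : ℕ) (hj : j ≤ n) : (prefSet σ j).card = j := by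
  have : prefSet σ j = (Finset.univ.filter (fun q : Fin n => (q : ℕ) < j)).image σ := by
    ext x
    simp only [prefSet, Finset.mem_filter, Finset.mem_univ, true_and, Finset.mem_image]
    constructor
    · intro hx; exact ⟨σ.symm x, hx, Equiv.apply_symm_apply σ x⟩
    · rintro ⟨q, hq, rfl⟩; rwa [Equiv.symm_apply_apply]
  rw [this, Finset.card_image_of_injOn (fun a _ b _ hab => σ.injective hab), card_prefFin j hj]

lemma pref_iff_prefSet {σ : Equiv.Perm (Fin n)} {K : Finset (Fin n)} :
    pref σ K ↔ prefSet σ K.card = K := by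
  constructor
  · intro h
    ext x
    simp only [prefSet, Finset.mem_filter, Finset.mem_univ, true_and]
    have := h (σ.symm x)
    rwa [Equiv.apply_symm_apply] at this
  · intro h q
    constructor
    · intro hq
      rw [← h]
      simp only [prefSet, Finset.mem_filter, Finset.mem_univ, true_and, Equiv.symm_apply_apply]
      exact hq
    · intro hq
      rw [← h] at hq
      simp only [prefSet, Finset.mem_filter, Finset.mem_univ, true_and,
        Equiv.symm_apply_apply] at hq
      exact hq

lemma cnt_mul_choose (v : Finset (Fin n)) :
    cnt v * Nat.choose n v.card = Nat.factorial n := by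
  have hvle : v.card ≤ n := by
    have := Finset.card_le_card (Finset.subset_univ v)
    simpa using this
  have hpart : Fintype.card (Equiv.Perm (Fin n))
      = ∑ K ∈ Finset.powersetCard v.card (Finset.univ : Finset (Fin n)),
          ((Finset.univ : Finset (Equiv.Perm (Fin n))).filter (fun σ => prefSet σ v.card = K)).card := by
    rw [← Finset.card_univ]
    apply Finset.card_eq_sum_card_fiberwise
    intro σ _
    rw [Finset.mem_coe, Finset.mem_powersetCard]
    exact ⟨Finset.subset_univ _, prefSet_card σ v.card hvle⟩
  have hfib : ∀ K ∈ Finset.powersetCard v.card (Finset.univ : Finset (Fin n)),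
      ((Finset.univ : Finset (Equiv.Perm (Fin n))).filter (fun σ => prefSet σ v.card = K)).card = cnt v := by
    intro K hK
    rw [Finset.mem_powersetCard] at hK
    have h1 : ((Finset.univ : Finset (Equiv.Perm (Fin n))).filter (fun σ => prefSet σ v.card = K))
        = ((Finset.univ : Finset (Equiv.Perm (Fin n))).filter (fun σ => pref σ K)) := by
      apply Finset.filter_congr
      intro σ _
      rw [pref_iff_prefSet, hK.2]
    rw [h1]
    exact cnt_eq_of_card_eq hK.2
  rw [Finset.sum_congr rfl hfib, Finset.sum_const, Finset.card_powersetCard, Finset.card_univ,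
    smul_eq_mul] at hpart
  rw [Fintype.card_perm, Fintype.card_fin] at hpart
  rw [mul_comm] at hpart
  exact hpart.symm


lemma finChain_subset {𝒜 ℬ : Finset (Finset (Fin n))} (h : ℬ ⊆ 𝒜) (hc : FinChain 𝒜) :
    FinChain ℬ := fun F hF G hG hne => hc F (h hF) G (h hG) hne

noncomputable def FLset (T : Finset (Fin n)) (S : Finset ℕ) : Finset (Finset (Finset (Fin n))) :=
  (T.powerset.powerset).filter (fun φ => φ.image Finset.card = S ∧ FinChain φ)

lemma mem_FLset {T : Finset (Fin n)} {S : Finset ℕ} {φ : Finset (Finset (Fin n))} :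
    φ ∈ FLset T S ↔ (∀ G ∈ φ, G ⊆ T) ∧ φ.image Finset.card = S ∧ FinChain φ := by
  unfold FLset
  simp only [Finset.mem_filter, Finset.mem_powerset]
  constructor
  · rintro ⟨h1, h2, h3⟩
    refine ⟨?_, h2, h3⟩
    intro G hG
    have := h1 hG
    rwa [Finset.mem_powerset] at this
  · rintro ⟨h1, h2, h3⟩
    refine ⟨?_, h2, h3⟩
    intro G hG
    rw [Finset.mem_powerset]
    exact h1 G hG

lemma FLB (m : ℝ) (hm : 0 < m) : ∀ (N : ℕ) (S : Finset ℕ), S.card = N → ∀ (T : Finset (Fin n)),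
    (∀ a ∈ S, a < T.card) →
    (∀ a b : ℕ, a ∈ insert T.card S → b ∈ insert T.card S → b < a → m ≤ (a.choose b : ℝ)) →
    m ^ S.card ≤ ((FLset T S).card : ℝ) := by
  intro N
  induction N with
  | zero =>
    intro S hS T hlt hpairs
    rw [Finset.card_eq_zero] at hS
    subst hS
    have : (∅ : Finset (Finset (Fin n))) ∈ FLset T ∅ := by
      rw [mem_FLset]
      refine ⟨by simp, by simp, ?_⟩
      intro F hF; simp at hF
    have hpos : 1 ≤ (FLset T (∅ : Finset ℕ)).card := Finset.card_pos.2 ⟨∅, this⟩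
    simp only [Finset.card_empty, pow_zero]
    exact_mod_cast hpos
  | succ N ih =>
    intro S hS T hlt hpairs
    have hSne : S.Nonempty := by
      rw [← Finset.card_pos, hS]; omega
    set a₁ := S.max' hSne with ha₁
    have ha₁S : a₁ ∈ S := Finset.max'_mem S hSne
    have ha₁T : a₁ < T.card := hlt a₁ ha₁S
    -- the canonical "top-of-flag" map
    set tf : Finset (Finset (Fin n)) → Finset (Fin n) :=
      fun φ => (φ.filter (fun G => G.card = a₁)).sup id with htf
    have htf_mem : ∀ φ ∈ FLset T S, (φ.filter (fun G => G.card = a₁)) = {tf φ} ∧ tf φ ∈ φ ∧ (tf φ).card = a₁ := by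
      intro φ hφ
      rw [mem_FLset] at hφ
      obtain ⟨hsubT, himg, hch⟩ := hφ
      have : a₁ ∈ φ.image Finset.card := by rw [himg]; exact ha₁S
      obtain ⟨G₀, hG₀, hG₀c⟩ := Finset.mem_image.1 this
      have hfilt : φ.filter (fun G => G.card = a₁) = {G₀} := by
        ext G
        simp only [Finset.mem_filter, Finset.mem_singleton]
        constructor
        · rintro ⟨hGφ, hGc⟩
          exact hch.card_inj hGφ hG₀ (by omega)
        · rintro rfl; exact ⟨hG₀, hG₀c⟩
      have htfG : tf φ = G₀ := by
        show (φ.filter (fun G => G.card = a₁)).sup id = G₀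
        rw [hfilt, Finset.sup_singleton, id_eq]
      exact ⟨by rw [hfilt, htfG], by rw [htfG]; exact hG₀, by rw [htfG]; exact hG₀c⟩
    have hmaps : ∀ φ ∈ FLset T S, tf φ ∈ Finset.powersetCard a₁ T := by
      intro φ hφ
      obtain ⟨-, hmem, hcard⟩ := htf_mem φ hφ
      rw [Finset.mem_powersetCard]
      rw [mem_FLset] at hφ
      exact ⟨hφ.1 _ hmem, hcard⟩
    have hsplit : (FLset T S).card
        = ∑ K ∈ Finset.powersetCard a₁ T, ((FLset T S).filter (fun φ => tf φ = K)).card :=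
      Finset.card_eq_sum_card_fiberwise hmaps
    -- each fiber has the same card as FLset K (S.erase a₁)
    have hfib : ∀ K ∈ Finset.powersetCard a₁ T,
        ((FLset T S).filter (fun φ => tf φ = K)).card = (FLset K (S.erase a₁)).card := by
      intro K hK
      rw [Finset.mem_powersetCard] at hK
      apply Finset.card_bij (fun φ _ => φ.erase K)
      · -- maps into FLset K (S.erase a₁)
        intro φ hφ
        rw [Finset.mem_filter] at hφ
        obtain ⟨hφ1, hφ2⟩ := hφ
        obtain ⟨hfilt, hmem, hcard⟩ := htf_mem φ hφ1
        rw [mem_FLset] at hφ1 ⊢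
        obtain ⟨hsubT, himg, hch⟩ := hφ1
        subst hφ2
        constructor
        · -- all in erase are ⊆ K
          intro G hG
          rw [Finset.mem_erase] at hG
          have hGc : G.card < a₁ := by
            have : G.card ∈ S := by rw [← himg]; exact Finset.mem_image_of_mem _ hG.2
            have hle := Finset.le_max' S _ this
            rcases lt_or_eq_of_le hle with h | h
            · exact h
            · exfalso
              apply hG.1
              exact hch.card_inj hG.2 hmem (by omega)
          have := hch.subset_iff_card hG.2 hmem
          rw [hcard] at this
          exact this.2 (by omega)
        constructor
        · -- image of cards
          rw [← himg]
          ext b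
          simp only [Finset.mem_image, Finset.mem_erase]
          constructor
          · rintro ⟨G, ⟨hGne, hGφ⟩, rfl⟩
            constructor
            · intro hb
              exact hGne (hch.card_inj hGφ hmem (by omega))
            · exact ⟨G, hGφ, rfl⟩
          · rintro ⟨hbne, G, hGφ, rfl⟩
            refine ⟨G, ⟨?_, hGφ⟩, rfl⟩
            intro h; subst h; exact hbne hcard
        · -- still a chain
          exact finChain_subset (Finset.erase_subset _ _) hch
      · -- injective
        intro φ1 h1 φ2 h2 heq
        rw [Finset.mem_filter] at h1 h2
        obtain ⟨h11, h12⟩ := h1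
        obtain ⟨h21, h22⟩ := h2
        obtain ⟨-, hm1, -⟩ := htf_mem φ1 h11
        obtain ⟨-, hm2, -⟩ := htf_mem φ2 h21
        have e1 : insert K (φ1.erase K) = φ1 := by rw [← h12]; exact Finset.insert_erase hm1
        have e2 : insert K (φ2.erase K) = φ2 := by rw [← h22]; exact Finset.insert_erase hm2
        rw [← e1, ← e2, heq]
      · -- surjective
        intro ψ hψ
        rw [mem_FLset] at hψ
        obtain ⟨hsubK, himgψ, hchψ⟩ := hψ
        have hKψ : K ∉ ψ := by
          intro h
          have : K.card ∈ S.erase a₁ := by rw [← himgψ]; exact Finset.mem_image_of_mem _ h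
          rw [Finset.mem_erase] at this
          exact this.1 hK.2
        have hsub : ∀ G ∈ ψ, G ⊂ K := by
          intro G hG
          constructor
          · exact hsubK G hG
          · intro hKG
            exact hKψ (by rwa [Finset.eq_of_subset_of_card_le (hsubK G hG)
              (Finset.card_le_card hKG)] at hG)
        refine ⟨insert K ψ, ?_, ?_⟩
        · rw [Finset.mem_filter]
          have hinsmem : insert K ψ ∈ FLset T S := by
            rw [mem_FLset]
            constructor
            · intro G hG
              rw [Finset.mem_insert] at hG
              rcases hG with rfl | hG
              · exact hK.1
              · exact (hsub G hG).subset.trans hK.1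
            constructor
            · rw [Finset.image_insert, himgψ, hK.2]
              exact Finset.insert_erase ha₁S
            · intro F hF G hG hne
              rw [Finset.mem_insert] at hF hG
              rcases hF with rfl | hF
              · rcases hG with rfl | hG
                · exact absurd rfl hne
                · exact Or.inr (hsub G hG)
              · rcases hG with rfl | hG
                · exact Or.inl (hsub F hF)
                · exact hchψ F hF G hG hne
          refine ⟨hinsmem, ?_⟩
          -- tf (insert K ψ) = K
          obtain ⟨hfilt, hmem, hcard⟩ := htf_mem _ hinsmem
          have hKfilt : K ∈ (insert K ψ).filter (fun G => G.card = a₁) :=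
            Finset.mem_filter.2 ⟨Finset.mem_insert_self K ψ, hK.2⟩
          rw [hfilt, Finset.mem_singleton] at hKfilt
          exact hKfilt.symm
        · rw [Finset.erase_insert hKψ]
    have hcard_er : (S.erase a₁).card = N := by
      rw [Finset.card_erase_of_mem ha₁S, hS]
      omega
    have hIH : ∀ K ∈ Finset.powersetCard a₁ T,
        m ^ N ≤ ((FLset K (S.erase a₁)).card : ℝ) := by
      intro K hK
      rw [Finset.mem_powersetCard] at hK
      have h1 : ∀ a ∈ S.erase a₁, a < K.card := by
        intro a ha
        rw [Finset.mem_erase] at ha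
        have := Finset.le_max' S a ha.2
        rw [hK.2]
        omega
      have h2 : ∀ a b : ℕ, a ∈ insert K.card (S.erase a₁) → b ∈ insert K.card (S.erase a₁) →
          b < a → m ≤ (a.choose b : ℝ) := by
        intro a b ha hb hba
        have hins : insert K.card (S.erase a₁) = S := by
          rw [hK.2]
          exact Finset.insert_erase ha₁S
        rw [hins] at ha hb
        exact hpairs a b (Finset.mem_insert_of_mem ha) (Finset.mem_insert_of_mem hb) hba
      have := ih (S.erase a₁) hcard_er K h1 h2
      rwa [hcard_er] at this
    have hchoose : m ≤ ((T.card.choose a₁ : ℕ) : ℝ) := by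
      apply hpairs T.card a₁ (Finset.mem_insert_self _ _) (Finset.mem_insert_of_mem ha₁S) ha₁T
    calc m ^ S.card = m * m ^ N := by rw [hS]; ring
      _ ≤ ((T.card.choose a₁ : ℕ) : ℝ) * m ^ N := by
          apply mul_le_mul_of_nonneg_right hchoose (by positivity)
      _ = ∑ _K ∈ Finset.powersetCard a₁ T, m ^ N := by
          rw [Finset.sum_const, Finset.card_powersetCard, nsmul_eq_mul]
      _ ≤ ∑ K ∈ Finset.powersetCard a₁ T, ((FLset K (S.erase a₁)).card : ℝ) :=
          Finset.sum_le_sum hIH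
      _ = ((FLset T S).card : ℝ) := by
          rw [hsplit, Finset.sum_congr rfl hfib]
          push_cast
          rfl


lemma N2 {𝒜 : Finset (Finset (Fin n))} (hc : FinChain 𝒜) (hA : 𝒜.Nonempty)
    {T : Finset (Fin n)} (hT : T ∈ 𝒜) (hTtop : ∀ G ∈ 𝒜, G ⊆ T)
    (m : ℝ) (hm : 0 < m)
    (hpairs : ∀ F ∈ 𝒜, ∀ G ∈ 𝒜, G ⊂ F → m ≤ ((F.card).choose G.card : ℝ)) :
    (cfun 𝒜 : ℝ) * m ^ (𝒜.card - 1) ≤ (cnt T : ℝ) := by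
  classical
  set S := 𝒜.image Finset.card with hSdef
  set S' := S.erase T.card with hS'def
  have hTS : T.card ∈ S := Finset.mem_image_of_mem _ hT
  have hinsS : insert T.card S' = S := Finset.insert_erase hTS
  have hS'lt : ∀ a ∈ S', a < T.card := by
    intro a ha
    rw [hS'def, Finset.mem_erase] at ha
    obtain ⟨G, hG, rfl⟩ := Finset.mem_image.1 ha.2
    have hGT : G ⊆ T := hTtop G hG
    have hne : G ≠ T := fun h => ha.1 (by rw [h])
    exact Finset.card_lt_card (ssubset_of_subset_of_ne hGT hne)
  have hScard : S.card = 𝒜.card :=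
    Finset.card_image_of_injOn (fun F hF G hG h => hc.card_inj hF hG h)
  have hS'card : S'.card = 𝒜.card - 1 := by
    rw [hS'def, Finset.card_erase_of_mem hTS, hScard]
  have hpairsS : ∀ a b : ℕ, a ∈ insert T.card S' → b ∈ insert T.card S' → b < a →
      m ≤ ((a.choose b : ℕ) : ℝ) := by
    intro a b ha hb hba
    rw [hinsS] at ha hb
    obtain ⟨F, hF, rfl⟩ := Finset.mem_image.1 ha
    obtain ⟨G, hG, rfl⟩ := Finset.mem_image.1 hb
    have hGF : G ⊂ F := by
      have hne : G ≠ F := by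
        intro h; subst h; omega
      rcases hc G hG F hF hne with h | h
      · exact h
      · exact absurd (Finset.card_lt_card h) (by omega)
    exact hpairs F hF G hG hGF
  have hFL : m ^ S'.card ≤ ((FLset T S').card : ℝ) :=
    FLB m hm S'.card S' rfl T hS'lt hpairsS
  -- for each flag, a permutation transporting 𝒜 onto the flag + top
  have hchain' : ∀ φ ∈ FLset T S', FinChain (insert T φ) ∧
      (insert T φ).image Finset.card = S := by
    intro φ hφ
    rw [mem_FLset] at hφ
    obtain ⟨hsubT, himg, hch⟩ := hφ
    have hsub' : ∀ G ∈ φ, G ⊂ T := by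
      intro G hG
      have hlt : G.card < T.card := by
        apply hS'lt
        rw [← himg]
        exact Finset.mem_image_of_mem _ hG
      exact ssubset_of_subset_of_ne (hsubT G hG) (fun h => by rw [h] at hlt; omega)
    constructor
    · intro F hF G hG hne
      rw [Finset.mem_insert] at hF hG
      rcases hF with rfl | hF
      · rcases hG with rfl | hG
        · exact absurd rfl hne
        · exact Or.inr (hsub' G hG)
      · rcases hG with rfl | hG
        · exact Or.inl (hsub' F hF)
        · exact hch F hF G hG hne
    · rw [Finset.image_insert, himg]
      exact hinsS
  have hex : ∀ φ : Finset (Finset (Fin n)), ∃ π : Equiv.Perm (Fin n),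
      φ ∈ FLset T S' → (∀ F ∈ 𝒜, ∀ F' ∈ insert T φ, F.card = F'.card →
        ∀ x : Fin n, x ∈ F ↔ π x ∈ F') := by
    intro φ
    by_cases hφ : φ ∈ FLset T S'
    · obtain ⟨hch', himg'⟩ := hchain' φ hφ
      obtain ⟨π, hπ⟩ := exists_pi hc hch' (by rw [himg'])
      exact ⟨π, fun _ => hπ⟩
    · exact ⟨1, fun h => absurd h hφ⟩
  choose π hπ using hex
  -- the injection
  have hinj : cfun 𝒜 * (FLset T S').card ≤ cnt T := by
    unfold cfun cnt
    rw [← Finset.card_product]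
    apply Finset.card_le_card_of_injOn
      (fun p => (p.1).trans (π p.2))
    · rintro ⟨σ, φ⟩ hp
      rw [Finset.mem_coe, Finset.mem_product] at hp
      obtain ⟨hσ, hφ⟩ := hp
      simp only [Finset.mem_coe, Finset.mem_filter, Finset.mem_univ, true_and] at hσ ⊢
      exact pref_trans (hσ T hT) (hπ φ hφ T hT T (Finset.mem_insert_self T φ) rfl) rfl
    · rintro ⟨σ₁, φ₁⟩ hp₁ ⟨σ₂, φ₂⟩ hp₂ heq
      simp only [Finset.coe_product, Set.mem_prod, Finset.mem_coe, Finset.mem_filter,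
        Finset.mem_univ, true_and] at hp₁ hp₂
      obtain ⟨hσ₁, hφ₁⟩ := hp₁
      obtain ⟨hσ₂, hφ₂⟩ := hp₂
      simp only at heq
      -- all elements of φᵢ are prefixes of the common image permutation
      have hprefs : ∀ (σ : Equiv.Perm (Fin n)) (φ : Finset (Finset (Fin n))),
          AP σ 𝒜 → φ ∈ FLset T S' → ∀ G ∈ φ, pref (σ.trans (π φ)) G := by
        intro σ φ hσ hφ G hG
        have hGS : G.card ∈ S := by
          rw [← hinsS]
          apply Finset.mem_insert_of_mem
          rw [mem_FLset] at hφ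
          rw [← hφ.2.1]
          exact Finset.mem_image_of_mem _ hG
        obtain ⟨F, hF, hFc⟩ := Finset.mem_image.1 hGS
        exact pref_trans (hσ F hF) (hπ φ hφ F hF G (Finset.mem_insert_of_mem hG) hFc) hFc
      set ρ := σ₁.trans (π φ₁) with hρ
      have hsub12 : ∀ (φa φb : Finset (Finset (Fin n))), φa ∈ FLset T S' → φb ∈ FLset T S' →
          (∀ G ∈ φa, pref ρ G) → (∀ G ∈ φb, pref ρ G) → φa ⊆ φb := by
        intro φa φb hφa hφb hpa hpb G hG
        rw [mem_FLset] at hφa hφb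
        have hGS : G.card ∈ S' := by rw [← hφa.2.1]; exact Finset.mem_image_of_mem _ hG
        obtain ⟨G₂, hG₂, hG₂c⟩ := Finset.mem_image.1 (by rw [hφb.2.1]; exact hGS :
          G.card ∈ φb.image Finset.card)
        have : G = G₂ := pref_unique (hpa G hG) (hpb G₂ hG₂) hG₂c.symm
        rwa [this]
      have heq' : Equiv.trans σ₁ (π φ₁) = Equiv.trans σ₂ (π φ₂) := heq
      have hp2 : ∀ G ∈ φ₂, pref ρ G := by
        intro G hG
        show pref (Equiv.trans σ₁ (π φ₁)) G
        rw [heq']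
        exact hprefs σ₂ φ₂ hσ₂ hφ₂ G hG
      have hφeq : φ₁ = φ₂ := by
        apply Finset.Subset.antisymm
        · exact hsub12 φ₁ φ₂ hφ₁ hφ₂ (hprefs σ₁ φ₁ hσ₁ hφ₁) hp2
        · exact hsub12 φ₂ φ₁ hφ₂ hφ₁ hp2 (hprefs σ₁ φ₁ hσ₁ hφ₁)
      subst hφeq
      have hσeq : σ₁ = σ₂ := by
        apply Equiv.ext
        intro q
        have := congrArg (fun τ : Equiv.Perm (Fin n) => τ q) heq
        simp only [Equiv.trans_apply] at this
        exact (π φ₁).injective this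
      rw [hσeq]
  -- combine
  have h1 : (cfun 𝒜 : ℝ) * m ^ (𝒜.card - 1) = (cfun 𝒜 : ℝ) * m ^ S'.card := by rw [hS'card]
  rw [h1]
  calc (cfun 𝒜 : ℝ) * m ^ S'.card ≤ (cfun 𝒜 : ℝ) * ((FLset T S').card : ℝ) := by
        apply mul_le_mul_of_nonneg_left hFL (by positivity)
    _ = ((cfun 𝒜 * (FLset T S').card : ℕ) : ℝ) := by push_cast; ring
    _ ≤ (cnt T : ℝ) := by exact_mod_cast hinj


lemma finChain_of_isChain {f : Finset (Finset (Fin n))}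
    (h : IsChain (· ⊂ ·) (f : Set (Finset (Fin n)))) : FinChain f :=
  fun F hF G hG hne => h (Finset.mem_coe.2 hF) (Finset.mem_coe.2 hG) hne

lemma isChain_of_finChain {f : Finset (Finset (Fin n))} (h : FinChain f) :
    IsChain (· ⊂ ·) (f : Set (Finset (Fin n))) :=
  fun F hF G hG hne => h F (Finset.mem_coe.1 hF) G (Finset.mem_coe.1 hG) hne

lemma halve (d : ℕ) (x : ℝ) (h1 : 1 ≤ x) (h2 : x < (d : ℝ) + 1) : x / 2 ≤ (d : ℝ) := by
  rcases le_or_gt 2 x with h | h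
  · have hd : x - 1 ≤ (d : ℝ) := by linarith
    linarith
  · have : (0:ℝ) < (d:ℝ) + 1 := by linarith
    have hd1 : (1:ℝ) ≤ (d:ℝ) + 1 := by
      have : (0:ℝ) ≤ (d:ℝ) := Nat.cast_nonneg d
      linarith
    have : (1:ℝ) ≤ (d:ℝ) ∨ (d:ℝ) = 0 := by
      rcases Nat.eq_zero_or_pos d with h0 | h0
      · exact Or.inr (by exact_mod_cast h0)
      · exact Or.inl (by exact_mod_cast h0)
    rcases this with hd | hd
    · linarith
    · exfalso; rw [hd] at h2; linarith


lemma double_count {γ : Type*} [Fintype γ] {β : Type*} (s : Finset β) (p : γ → β → Prop) :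
    ∑ a : γ, (((s.filter (p a)).card : ℕ) : ℝ)
      = ∑ b ∈ s, (((Finset.univ.filter (fun a => p a b)).card : ℕ) : ℝ) := by
  classical
  have h : ∀ a : γ, (((s.filter (p a)).card : ℕ) : ℝ) = ∑ b ∈ s, if p a b then (1:ℝ) else 0 := by
    intro a
    rw [Finset.card_filter]
    push_cast
    apply Finset.sum_congr rfl
    intro b _
    split <;> norm_num
  have h2 : ∀ b ∈ s, (((Finset.univ.filter (fun a => p a b)).card : ℕ) : ℝ)
      = ∑ a : γ, if p a b then (1:ℝ) else 0 := by
    intro b _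
    rw [Finset.card_filter]
    push_cast
    apply Finset.sum_congr rfl
    intro a _
    split <;> norm_num
  rw [Finset.sum_congr rfl (fun a _ => h a), Finset.sum_comm]
  exact (Finset.sum_congr rfl h2).symm

end S6

open S6 in
set_option maxHeartbeats 4000000 in
/-- Iteration lemma: if `ℋ ⊆ 𝒢ₖ[𝓕]` is small and well-spread, a further good edge
(a `k`-chain of sets of `𝓕`) can be added without violating the degree conditions. -/
theorem statement6 (k : ℕ) (hk : 2 ≤ k) (α : ℝ) (hα : 0 < α) :
    ∃ δ : ℝ, 0 < δ ∧ ∀ (n : ℕ) (𝓕 : Finset (Finset (Fin n))) (m : ℝ)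
      (H : Finset (Finset (Finset (Fin n)))),
      ((k : ℝ) - 1 + α) * (n.choose (n / 2)) ≤ (𝓕.card : ℝ) →
      δ⁻¹ ≤ m →
      (∀ F ∈ 𝓕, ∀ G ∈ 𝓕, G ⊂ F → m ≤ (F.card.choose G.card : ℝ)) →
      (∀ e ∈ H, e ⊆ 𝓕 ∧ IsKChain k e) →
      (H.card : ℝ) ≤ δ ^ k * m ^ (k - 1) * (n.choose (n / 2)) →
      (∀ ℓ : ℕ, 1 ≤ ℓ → ℓ ≤ k → ∀ A : Finset (Finset (Fin n)), A.card = ℓ →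
        ((H.filter (fun e => A ⊆ e)).card : ℝ) ≤ (δ * m) ^ (k - ℓ)) →
      ∃ f : Finset (Finset (Fin n)), f ⊆ 𝓕 ∧ IsKChain k f ∧ f ∉ H ∧
        (∀ ℓ : ℕ, 1 ≤ ℓ → ℓ ≤ k → ∀ A : Finset (Finset (Fin n)), A.card = ℓ →
          (((insert f H).filter (fun e => A ⊆ e)).card : ℝ) ≤ (δ * m) ^ (k - ℓ)) := by
  classical
  set α' : ℝ := min α 1 with hα'def
  have hα'pos : 0 < α' := lt_min hα one_pos
  have hα'le1 : α' ≤ 1 := min_le_right _ _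
  have hα'leα : α' ≤ α := min_le_left _ _
  set δ : ℝ := α' / ((k:ℝ)^3 * 2^(k+4)) with hδdef
  have hk2 : (2:ℝ) ≤ (k:ℝ) := by exact_mod_cast hk
  have hkpos : (0:ℝ) < (k:ℝ) := by linarith
  have hDpos : (0:ℝ) < (k:ℝ)^3 * 2^(k+4) := by positivity
  have hδpos : 0 < δ := by rw [hδdef]; positivity
  have hδD : δ * ((k:ℝ)^3 * 2^(k+4)) = α' := by
    rw [hδdef]; field_simp
  have hδ1 : δ ≤ 1 := by
    rw [hδdef]
    rw [div_le_one hDpos]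
    have hk1 : (1:ℝ) ≤ (k:ℝ) := by linarith
    have h1 : (1:ℝ) ≤ (k:ℝ)^3 := one_le_pow₀ hk1
    have h2 : (1:ℝ) ≤ (2:ℝ)^(k+4) := one_le_pow₀ (by norm_num)
    nlinarith
  have hδα : 2*(k:ℝ)*δ ≤ α'/2 := by
    have h1 : (4:ℝ)*k ≤ (k:ℝ)^3 * 2^(k+4) := by
      have h2 : (1:ℝ) ≤ (2:ℝ)^(k+4) := one_le_pow₀ (by norm_num)
      have hsq : (4:ℝ) ≤ (k:ℝ)^2 := by nlinarith
      have hcube : (4:ℝ)*k ≤ (k:ℝ)^3 := by nlinarith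
      nlinarith
    have := mul_le_mul_of_nonneg_left h1 (le_of_lt hδpos)
    rw [hδD] at this
    linarith
  have hCtot : δ*(1 + (k:ℝ)^2*2^k) ≤ α'/(8*k) := by
    have h16 : (2:ℝ)^(k+4) = 2^k*16 := by rw [pow_add]; norm_num
    have heq : (8*(k:ℝ)) * (2*(k:ℝ)^2*2^k*δ) = α' := by
      rw [← hδD, h16]; ring
    have h1 : (1:ℝ) ≤ (k:ℝ)^2*2^k := by
      have h2 : (1:ℝ) ≤ (2:ℝ)^k := one_le_pow₀ (by norm_num)
      have hsq : (1:ℝ) ≤ (k:ℝ)^2 := by nlinarith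
      nlinarith
    have h3 : δ*(1 + (k:ℝ)^2*2^k) ≤ 2*(k:ℝ)^2*2^k*δ := by nlinarith
    have h4 : 2*(k:ℝ)^2*2^k*δ = α'/(8*k) := by
      rw [eq_div_iff (ne_of_gt (by positivity : (0:ℝ) < 8*(k:ℝ)))]
      linear_combination heq
    linarith
  refine ⟨δ, hδpos, ?_⟩
  intro n 𝓕 m H hcard hminv hpairs hH hHcard hΔ
  by_contra hcon
  push_neg at hcon
  have hm0 : 0 < m := lt_of_lt_of_le (by positivity) hminv
  have hδm1 : (1:ℝ) ≤ δ * m := by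
    have := mul_le_mul_of_nonneg_left hminv (le_of_lt hδpos)
    rwa [mul_inv_cancel₀ (ne_of_gt hδpos)] at this
  have hδmpow : ∀ j : ℕ, (1:ℝ) ≤ (δ * m)^j := fun j => one_le_pow₀ hδm1
  set N : ℕ := n.choose (n / 2) with hN
  have hNpos : 0 < N := Nat.choose_pos (Nat.div_le_self n 2)
  set dg : Finset (Finset (Fin n)) → ℕ := fun A => (H.filter (fun e => A ⊆ e)).card with hdg
  set sub : Finset (Finset (Fin n)) :=
    𝓕.filter (fun v => ¬ ((δ*m)^(k-1) < (dg {v} : ℝ) + 1)) with hsubdef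
  have hsub𝓕 : sub ⊆ 𝓕 := Finset.filter_subset _ _
  have hsubdeg : ∀ v ∈ sub, (dg {v} : ℝ) ≤ (δ*m)^(k-1) := by
    intro v hv
    rw [hsubdef, Finset.mem_filter] at hv
    push_neg at hv
    linarith [hv.2]
  have hsubcard : ((k:ℝ) - 1 + α'/2) * N ≤ (sub.card : ℝ) := by
    set S₁ : Finset (Finset (Fin n)) :=
      𝓕.filter (fun v => (δ*m)^(k-1) < (dg {v} : ℝ) + 1) with hS₁def
    have hsplit : S₁.card + sub.card = 𝓕.card := by
      rw [hS₁def, hsubdef]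
      exact Finset.card_filter_add_card_filter_not _
    have hdouble : ∑ v ∈ S₁, dg {v} ≤ k * H.card := by
      have h1 : ∀ v, dg {v} = (H.filter (fun e => v ∈ e)).card := by
        intro v
        show (H.filter (fun e => {v} ⊆ e)).card = (H.filter (fun e => v ∈ e)).card
        congr 1
        apply Finset.filter_congr
        intro e _
        simp [Finset.singleton_subset_iff]
      have h2 : ∑ v ∈ S₁, dg {v} = ∑ e ∈ H, (S₁.filter (fun v => v ∈ e)).card := by
        rw [Finset.sum_congr rfl (fun v _ => h1 v)]
        simp only [Finset.card_filter]
        rw [Finset.sum_comm]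
      rw [h2]
      have h3 : ∀ e ∈ H, (S₁.filter (fun v => v ∈ e)).card ≤ k := by
        intro e he
        calc (S₁.filter (fun v => v ∈ e)).card ≤ e.card := by
              apply Finset.card_le_card
              intro v hv
              exact (Finset.mem_filter.1 hv).2
          _ = k := (hH e he).2.1
      calc ∑ e ∈ H, (S₁.filter (fun v => v ∈ e)).card ≤ ∑ _e ∈ H, k :=
            Finset.sum_le_sum h3
        _ = k * H.card := by rw [Finset.sum_const, smul_eq_mul, mul_comm]
    have hS₁deg : ∀ v ∈ S₁, ((δ*m)^(k-1))/2 ≤ (dg {v} : ℝ) := by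
      intro v hv
      rw [hS₁def, Finset.mem_filter] at hv
      exact halve _ _ (hδmpow (k-1)) hv.2
    have hS₁card : (S₁.card : ℝ) * ((δ*m)^(k-1)/2) ≤ (k:ℝ) * H.card := by
      calc (S₁.card:ℝ) * ((δ*m)^(k-1)/2) = ∑ _v ∈ S₁, ((δ*m)^(k-1)/2) := by
            rw [Finset.sum_const, nsmul_eq_mul]
        _ ≤ ∑ v ∈ S₁, (dg {v} : ℝ) := Finset.sum_le_sum hS₁deg
        _ = ((∑ v ∈ S₁, dg {v} : ℕ) : ℝ) := by push_cast; rfl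
        _ ≤ (k:ℝ) * H.card := by
            have := hdouble
            exact_mod_cast Nat.cast_le.2 this
    have hS₁N : (S₁.card : ℝ) ≤ 2*k*δ*N := by
      have hx : (0:ℝ) < (δ*m)^(k-1)/2 := by positivity
      have h3 : δ^k * m^(k-1) = δ * (δ*m)^(k-1) := by
        have hkk : k = (k-1)+1 := by omega
        rw [mul_pow]
        calc δ^k * m^(k-1) = δ^((k-1)+1) * m^(k-1) := by rw [← hkk]
          _ = δ * (δ^(k-1) * m^(k-1)) := by rw [pow_succ]; ring
      have h2 : (k:ℝ)*H.card ≤ (k:ℝ) * (δ^k * m^(k-1) * N) :=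
        mul_le_mul_of_nonneg_left hHcard (le_of_lt hkpos)
      have hR : (k:ℝ) * (δ^k * m^(k-1) * N) = (2*k*δ*N)*((δ*m)^(k-1)/2) := by
        rw [h3]; ring
      have hfin2 : (S₁.card:ℝ)*((δ*m)^(k-1)/2) ≤ (2*k*δ*N)*((δ*m)^(k-1)/2) := by
        rw [← hR]
        exact le_trans hS₁card h2
      exact le_of_mul_le_mul_right hfin2 hx
    have h𝓕 : ((k:ℝ)-1+α') * N ≤ (𝓕.card:ℝ) := by
      refine le_trans ?_ hcard
      apply mul_le_mul_of_nonneg_right _ (Nat.cast_nonneg N)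
      linarith
    have hsubeq : (sub.card : ℝ) = (𝓕.card : ℝ) - S₁.card := by
      have := hsplit
      push_cast [← this]
      ring
    have hδαN : 2*(k:ℝ)*δ*N ≤ (α'/2)*N :=
      mul_le_mul_of_nonneg_right hδα (Nat.cast_nonneg N)
    rw [hsubeq]
    have : ((k:ℝ) - 1 + α'/2) * N = ((k:ℝ)-1+α') * N - (α'/2)*N := by ring
    rw [this]
    have h4 : (S₁.card : ℝ) ≤ (α'/2)*N := le_trans hS₁N hδαN
    linarith
  set Sat : ℕ → Finset (Finset (Finset (Fin n))) := fun ℓ =>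
    (sub.powersetCard ℓ).filter (fun A => FinChain A ∧ (δ*m)^(k-ℓ) < (dg A : ℝ) + 1) with hSatdef
  set SatAll : Finset (Finset (Finset (Fin n))) := (Finset.Icc 2 (k-1)).biUnion Sat with hSatAlldef
  have hSatAllmem : ∀ A ∈ SatAll, A.Nonempty ∧ A ⊆ sub := by
    intro A hA
    rw [hSatAlldef, Finset.mem_biUnion] at hA
    obtain ⟨ℓ, hℓ, hA⟩ := hA
    rw [hSatdef] at hA
    have h1 := (Finset.mem_powersetCard.1 (Finset.mem_of_mem_filter _ hA))
    rw [Finset.mem_Icc] at hℓ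
    constructor
    · rw [← Finset.card_pos, h1.2]; omega
    · exact h1.1
  have hblocked : ∀ f, f ⊆ sub → f.card = k → FinChain f → f ∉ H → ∃ A ∈ SatAll, A ⊆ f := by
    intro f hfsub hfk hfchain hfH
    have hf𝓕 : f ⊆ 𝓕 := hfsub.trans hsub𝓕
    obtain ⟨ℓ, h1ℓ, hℓk, A, hAcard, hviol⟩ :=
      hcon f hf𝓕 ⟨hfk, isChain_of_finChain hfchain⟩ hfH
    by_cases hAf : A ⊆ f
    · have hℓne : ℓ ≠ k := by
        intro hℓeq
        subst hℓeq
        have hAf' : A = f := Finset.eq_of_subset_of_card_le hAf (by rw [hAcard, hfk])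
        subst hAf'
        have hsub1 : (insert A H).filter (fun e => A ⊆ e) ⊆ {A} := by
          intro e he
          rw [Finset.mem_filter, Finset.mem_insert] at he
          rw [Finset.mem_singleton]
          rcases he.1 with rfl | heH
          · rfl
          · have : e = A := by
              apply (Finset.eq_of_subset_of_card_le he.2 _).symm
              rw [hAcard, (hH e heH).2.1]
            rw [this] at heH
            exact absurd heH hfH
        have hle : ((insert A H).filter (fun e => A ⊆ e)).card ≤ 1 := by
          calc ((insert A H).filter (fun e => A ⊆ e)).card ≤ ({A} : Finset _).card :=
                Finset.card_le_card hsub1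
            _ = 1 := Finset.card_singleton A
        rw [Nat.sub_self, pow_zero] at hviol
        have h3 : (1:ℝ) < 1 := lt_of_lt_of_le hviol (by exact_mod_cast hle)
        exact absurd h3 (lt_irrefl _)
      have hcount : ((insert f H).filter (fun e => A ⊆ e)).card = dg A + 1 := by
        rw [Finset.filter_insert, if_pos hAf]
        rw [Finset.card_insert_of_notMem (fun h => hfH (Finset.mem_of_mem_filter _ h))]
      rw [hcount] at hviol
      have hsat : (δ*m)^(k-ℓ) < (dg A : ℝ) + 1 := by
        exact_mod_cast hviol
      have hℓ1 : ℓ ≠ 1 := by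
        intro hℓeq
        subst hℓeq
        obtain ⟨v, rfl⟩ := Finset.card_eq_one.1 hAcard
        have hv : v ∈ sub := hfsub (hAf (Finset.mem_singleton_self v))
        rw [hsubdef, Finset.mem_filter] at hv
        exact hv.2 hsat
      refine ⟨A, ?_, hAf⟩
      rw [hSatAlldef, Finset.mem_biUnion]
      refine ⟨ℓ, Finset.mem_Icc.2 ⟨by omega, by omega⟩, ?_⟩
      rw [hSatdef]
      rw [Finset.mem_filter, Finset.mem_powersetCard]
      exact ⟨⟨hAf.trans hfsub, hAcard⟩, finChain_subset hAf hfchain, hsat⟩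
    · have heq2 : (insert f H).filter (fun e => A ⊆ e) = H.filter (fun e => A ⊆ e) := by
        rw [Finset.filter_insert, if_neg hAf]
      rw [heq2] at hviol
      exact absurd (hΔ ℓ h1ℓ hℓk A hAcard) (not_le.2 hviol)
  have master : ∀ σ : Equiv.Perm (Fin n),
      (sub.filter (fun F => pref σ F)).card ≤ (k-1)
        + (H.filter (fun e => e ⊆ sub ∧ AP σ e)).card
        + k * (SatAll.filter (fun A => AP σ A)).card := by
    intro σ
    set C' : Finset (Finset (Fin n)) := sub.filter (fun F => pref σ F) with hC'
    set X : ℕ := C'.card with hX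
    rcases lt_or_ge X k with hXk | hXk
    · omega
    · have hCsub : C' ⊆ sub := Finset.filter_subset _ _
      have hCpref : ∀ F ∈ C', pref σ F := fun F hF => (Finset.mem_filter.1 hF).2
      have hCchain : FinChain C' := by
        intro F hF G hG hne
        have hpF := hCpref F hF
        have hpG := hCpref G hG
        rcases lt_trichotomy F.card G.card with h | h | h
        · exact Or.inl (Finset.ssubset_iff_subset_ne.2
            ⟨pref_mono hpF hpG (le_of_lt h), fun heq => by rw [heq] at h; omega⟩)
        · exact absurd (pref_unique hpF hpG h) hne
        · exact Or.inr (Finset.ssubset_iff_subset_ne.2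
            ⟨pref_mono hpG hpF (le_of_lt h), fun heq => by rw [heq] at h; omega⟩)
      set g : Finset (Fin n) → ℕ := fun G => (C'.filter (fun K => K ⊆ G)).card with hg
      have hg1 : ∀ G ∈ C', 1 ≤ g G ∧ g G ≤ X := by
        intro G hG
        constructor
        · apply Finset.card_pos.2
          exact ⟨G, Finset.mem_filter.2 ⟨hG, Finset.Subset.refl G⟩⟩
        · exact Finset.card_le_card (Finset.filter_subset _ _)
      have hginj : ∀ F ∈ C', ∀ G ∈ C', g F = g G → F = G := by
        intro F hF G hG hFG
        by_contra hne
        have key : ∀ F' G' : Finset (Fin n), F' ∈ C' → G' ∈ C' → F' ⊂ G' → g F' < g G' := by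
          intro F' G' hF' hG' hss
          apply Finset.card_lt_card
          constructor
          · intro K hK
            rw [Finset.mem_filter] at hK ⊢
            exact ⟨hK.1, hK.2.trans hss.subset⟩
          · intro habs
            have : G' ∈ C'.filter (fun K => K ⊆ G') :=
              Finset.mem_filter.2 ⟨hG', Finset.Subset.refl G'⟩
            have := (Finset.mem_filter.1 (habs this)).2
            exact hss.not_subset this
        rcases hCchain F hF G hG hne with h | h
        · have := key F G hF hG h; omega
        · have := key G F hG hF h; omega
      have himg : C'.image g = Finset.Icc 1 X := by
        apply Finset.eq_of_subset_of_card_le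
        · intro t ht
          obtain ⟨G, hG, rfl⟩ := Finset.mem_image.1 ht
          exact Finset.mem_Icc.2 ⟨(hg1 G hG).1, (hg1 G hG).2⟩
        · rw [Nat.card_Icc]
          rw [Finset.card_image_of_injOn (fun F hF G hG => hginj F hF G hG)]
          omega
      set fj : ℕ → Finset (Finset (Fin n)) :=
        fun j => C'.filter (fun G => j - k < g G ∧ g G ≤ j) with hfj
      have hfsubC : ∀ j, fj j ⊆ C' := fun j => Finset.filter_subset _ _
      have hfimg : ∀ j ∈ Finset.Icc k X, (fj j).image g = Finset.Ioc (j-k) j := by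
        intro j hj
        rw [Finset.mem_Icc] at hj
        apply Finset.Subset.antisymm
        · intro t ht
          obtain ⟨G, hG, rfl⟩ := Finset.mem_image.1 ht
          rw [Finset.mem_filter] at hG
          exact Finset.mem_Ioc.2 ⟨hG.2.1, hG.2.2⟩
        · intro t ht
          rw [Finset.mem_Ioc] at ht
          have htX : t ∈ Finset.Icc 1 X := Finset.mem_Icc.2 ⟨by omega, by omega⟩
          rw [← himg] at htX
          obtain ⟨G, hG, rfl⟩ := Finset.mem_image.1 htX
          exact Finset.mem_image_of_mem g (Finset.mem_filter.2 ⟨hG, ht.1, ht.2⟩)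
      have hfcard : ∀ j ∈ Finset.Icc k X, (fj j).card = k := by
        intro j hj
        have h1 : (fj j).card = ((fj j).image g).card := by
          rw [Finset.card_image_of_injOn
            (fun a ha b hb => hginj a (hfsubC j ha) b (hfsubC j hb))]
        rw [h1, hfimg j hj, Nat.card_Ioc]
        rw [Finset.mem_Icc] at hj
        omega
      have hfsup : ∀ j ∈ Finset.Icc k X, (fj j).sup g = j := by
        intro j hj
        apply le_antisymm
        · apply Finset.sup_le
          intro G hG
          rw [hfj] at hG
          exact (Finset.mem_filter.1 hG).2.2
        · have hmem : j ∈ (fj j).image g := by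
            rw [hfimg j hj, Finset.mem_Ioc]
            rw [Finset.mem_Icc] at hj
            omega
          obtain ⟨G, hG, hGj⟩ := Finset.mem_image.1 hmem
          calc j = g G := hGj.symm
            _ ≤ (fj j).sup g := Finset.le_sup hG
      have hsplitIcc := Finset.card_filter_add_card_filter_not
        (s := Finset.Icc k X) (p := fun j => fj j ∈ H)
      have hIccH : ((Finset.Icc k X).filter (fun j => fj j ∈ H)).card
          ≤ (H.filter (fun e => e ⊆ sub ∧ AP σ e)).card := by
        apply Finset.card_le_card_of_injOn (fun j => fj j)
        · intro j hj
          rw [Finset.mem_coe, Finset.mem_filter] at hj ⊢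
          exact ⟨hj.2, (hfsubC j).trans hCsub,
            fun F hF => hCpref F (hfsubC j hF)⟩
        · intro j₁ h₁ j₂ h₂ heq
          rw [Finset.mem_coe, Finset.mem_filter] at h₁ h₂
          have heq' : fj j₁ = fj j₂ := heq
          rw [← hfsup j₁ h₁.1, ← hfsup j₂ h₂.1, heq']
      have hIccS : ((Finset.Icc k X).filter (fun j => ¬ fj j ∈ H)).card
          ≤ k * (SatAll.filter (fun A => AP σ A)).card := by
        have hsub2 : (Finset.Icc k X).filter (fun j => ¬ fj j ∈ H)
            ⊆ (SatAll.filter (fun A => AP σ A)).biUnion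
                (fun A => (Finset.Icc k X).filter (fun j => A ⊆ fj j)) := by
          intro j hj
          rw [Finset.mem_filter] at hj
          obtain ⟨A, hASat, hAfj⟩ := hblocked (fj j) ((hfsubC j).trans hCsub)
            (hfcard j hj.1) (finChain_subset (hfsubC j) hCchain) hj.2
          rw [Finset.mem_biUnion]
          refine ⟨A, Finset.mem_filter.2 ⟨hASat,
            fun F hF => hCpref F (hfsubC j (hAfj hF))⟩,
            Finset.mem_filter.2 ⟨hj.1, hAfj⟩⟩
        calc ((Finset.Icc k X).filter (fun j => ¬ fj j ∈ H)).card
            ≤ ((SatAll.filter (fun A => AP σ A)).biUnion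
                (fun A => (Finset.Icc k X).filter (fun j => A ⊆ fj j))).card :=
              Finset.card_le_card hsub2
          _ ≤ ∑ A ∈ SatAll.filter (fun A => AP σ A),
                ((Finset.Icc k X).filter (fun j => A ⊆ fj j)).card :=
              Finset.card_biUnion_le
          _ ≤ ∑ _A ∈ SatAll.filter (fun A => AP σ A), k := by
              apply Finset.sum_le_sum
              intro A hA
              have hAne : A.Nonempty := (hSatAllmem A (Finset.mem_of_mem_filter _ hA)).1
              obtain ⟨a₀, ha₀⟩ := hAne
              have hsubIcc : (Finset.Icc k X).filter (fun j => A ⊆ fj j)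
                  ⊆ Finset.Icc (g a₀) (g a₀ + (k-1)) := by
                intro j hj
                rw [Finset.mem_filter] at hj
                have ha₀fj : a₀ ∈ fj j := hj.2 ha₀
                rw [hfj] at ha₀fj
                have := (Finset.mem_filter.1 ha₀fj).2
                rw [Finset.mem_Icc] at hj ⊢
                omega
              calc ((Finset.Icc k X).filter (fun j => A ⊆ fj j)).card
                  ≤ (Finset.Icc (g a₀) (g a₀ + (k-1))).card := Finset.card_le_card hsubIcc
                _ = k := by rw [Nat.card_Icc]; omega
          _ = k * (SatAll.filter (fun A => AP σ A)).card := by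
              rw [Finset.sum_const, smul_eq_mul, mul_comm]
      have hIccCard : (Finset.Icc k X).card = X + 1 - k := Nat.card_Icc k X
      omega
  set L : ℝ := ∑ v ∈ sub, (cnt v : ℝ) with hLdef
  have hLsum : ∑ σ : Equiv.Perm (Fin n), ((sub.filter (fun F => pref σ F)).card : ℝ) = L := by
    rw [hLdef]
    exact double_count sub (fun σ v => pref σ v)
  have hEsum : ∑ σ : Equiv.Perm (Fin n), ((H.filter (fun e => e ⊆ sub ∧ AP σ e)).card : ℝ)
      = ∑ e ∈ H.filter (fun e => e ⊆ sub), (cfun e : ℝ) := by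
    have h : ∀ σ : Equiv.Perm (Fin n), ((H.filter (fun e => e ⊆ sub ∧ AP σ e)).card : ℝ)
        = ∑ e ∈ H, if e ⊆ sub ∧ AP σ e then (1:ℝ) else 0 := by
      intro σ
      rw [Finset.card_filter]
      push_cast
      apply Finset.sum_congr rfl
      intro b _
      split <;> norm_num
    rw [Finset.sum_congr rfl (fun σ _ => h σ), Finset.sum_comm, Finset.sum_filter]
    apply Finset.sum_congr rfl
    intro e _
    by_cases hsube : e ⊆ sub
    · simp only [hsube, true_and, if_true]
      unfold cfun
      rw [Finset.card_filter]
      push_cast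
      apply Finset.sum_congr rfl
      intro σ _
      split <;> norm_num
    · simp only [hsube, false_and, if_false]
      simp
  have hSsum : ∑ σ : Equiv.Perm (Fin n), ((SatAll.filter (fun A => AP σ A)).card : ℝ)
      = ∑ A ∈ SatAll, (cfun A : ℝ) := by
    exact double_count SatAll (fun σ A => AP σ A)
  -- top-of-chain selection
  have htopx : ∀ (A : Finset (Finset (Fin n))), FinChain A → A.Nonempty →
      ∃ T, T ∈ A ∧ ∀ G ∈ A, G ⊆ T := by
    intro A hch hne
    obtain ⟨T, hT, hmax⟩ := Finset.exists_max_image A Finset.card hne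
    exact ⟨T, hT, fun G hG => (hch.subset_iff_card hG hT).2 (hmax G hG)⟩
  set topOf : Finset (Finset (Fin n)) → Finset (Fin n) :=
    fun A => if h : ∃ T, T ∈ A ∧ ∀ G ∈ A, G ⊆ T then h.choose else ∅ with htopOf
  have htopOf_spec : ∀ A : Finset (Finset (Fin n)), FinChain A → A.Nonempty →
      topOf A ∈ A ∧ ∀ G ∈ A, G ⊆ topOf A := by
    intro A hch hne
    have h := htopx A hch hne
    rw [htopOf]
    simp only [dif_pos h]
    exact h.choose_spec
  have hδpow : ∀ j : ℕ, 1 ≤ j → δ^j ≤ δ := by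
    intro j hj
    calc δ^j ≤ δ^1 := pow_le_pow_of_le_one (le_of_lt hδpos) hδ1 hj
      _ = δ := pow_one δ
  have hN2' : ∀ (A : Finset (Finset (Fin n))), A ⊆ 𝓕 → FinChain A → A.Nonempty →
      (cfun A : ℝ) ≤ (cnt (topOf A) : ℝ) / m^(A.card - 1) := by
    intro A hA𝓕 hch hne
    obtain ⟨hTmem, hTtop⟩ := htopOf_spec A hch hne
    have hpairs' : ∀ F ∈ A, ∀ G ∈ A, G ⊂ F → m ≤ ((F.card).choose G.card : ℝ) :=
      fun F hF G hG h => hpairs F (hA𝓕 hF) G (hA𝓕 hG) h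
    have hN2 := N2 hch hne hTmem hTtop m hm0 hpairs'
    rw [le_div_iff₀ (by positivity)]
    exact hN2
  have hEbound : ∑ e ∈ H.filter (fun e => e ⊆ sub), (cfun e : ℝ) ≤ δ * L := by
    have hHprop : ∀ e ∈ H.filter (fun e => e ⊆ sub), FinChain e ∧ e.Nonempty ∧ e ⊆ 𝓕 ∧ e.card = k := by
      intro e he
      rw [Finset.mem_filter] at he
      have h1 := hH e he.1
      refine ⟨finChain_of_isChain h1.2.2, ?_, h1.1, h1.2.1⟩
      rw [← Finset.card_pos, h1.2.1]; omega
    have hmapsto : ∀ e ∈ H.filter (fun e => e ⊆ sub), topOf e ∈ sub := by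
      intro e he
      obtain ⟨hch, hne, -, -⟩ := hHprop e he
      have := (htopOf_spec e hch hne).1
      rw [Finset.mem_filter] at he
      exact he.2 this
    rw [← Finset.sum_fiberwise_of_maps_to hmapsto (fun e => (cfun e : ℝ))]
    have hinner : ∀ v ∈ sub,
        ∑ e ∈ (H.filter (fun e => e ⊆ sub)).filter (fun e => topOf e = v), (cfun e : ℝ)
          ≤ δ * (cnt v : ℝ) := by
      intro v hv
      set fib := (H.filter (fun e => e ⊆ sub)).filter (fun e => topOf e = v) with hfib
      have hfibcard : fib.card ≤ dg {v} := by
        rw [hdg]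
        apply Finset.card_le_card
        intro e he
        rw [hfib, Finset.mem_filter] at he
        have hmem := he.1
        obtain ⟨hch, hne, -, -⟩ := hHprop e hmem
        rw [Finset.mem_filter] at hmem
        rw [Finset.mem_filter]
        refine ⟨hmem.1, ?_⟩
        rw [Finset.singleton_subset_iff, ← he.2]
        exact (htopOf_spec e hch hne).1
      have hperE : ∀ e ∈ fib, (cfun e : ℝ) ≤ (cnt v : ℝ) / m^(k-1) := by
        intro e he
        rw [hfib, Finset.mem_filter] at he
        obtain ⟨hch, hne, he𝓕, hek⟩ := hHprop e he.1
        have := hN2' e he𝓕 hch hne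
        rw [hek, he.2] at this
        exact this
      calc ∑ e ∈ fib, (cfun e : ℝ) ≤ ∑ _e ∈ fib, (cnt v : ℝ) / m^(k-1) :=
            Finset.sum_le_sum hperE
        _ = (fib.card : ℝ) * ((cnt v : ℝ) / m^(k-1)) := by
            rw [Finset.sum_const, nsmul_eq_mul]
        _ ≤ (dg {v} : ℝ) * ((cnt v : ℝ) / m^(k-1)) := by
            apply mul_le_mul_of_nonneg_right _ (by positivity)
            exact_mod_cast hfibcard
        _ ≤ (δ*m)^(k-1) * ((cnt v : ℝ) / m^(k-1)) := by
            apply mul_le_mul_of_nonneg_right (hsubdeg v hv) (by positivity)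
        _ = δ^(k-1) * (cnt v : ℝ) := by
            rw [mul_pow]
            field_simp
        _ ≤ δ * (cnt v : ℝ) := by
            apply mul_le_mul_of_nonneg_right (hδpow (k-1) (by omega)) (Nat.cast_nonneg _)
    calc ∑ v ∈ sub, ∑ e ∈ (H.filter (fun e => e ⊆ sub)).filter (fun e => topOf e = v), (cfun e : ℝ)
        ≤ ∑ v ∈ sub, δ * (cnt v : ℝ) := Finset.sum_le_sum hinner
      _ = δ * L := by rw [hLdef, Finset.mul_sum]
  have hSatbound : ∑ A ∈ SatAll, (cfun A : ℝ) ≤ ((k:ℝ) * 2^k) * δ * L := by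
    have hLnn : (0:ℝ) ≤ L := by
      rw [hLdef]
      exact Finset.sum_nonneg (fun v _ => Nat.cast_nonneg _)
    have hdisj : (↑(Finset.Icc 2 (k-1)) : Set ℕ).PairwiseDisjoint Sat := by
      intro a _ b _ hab
      simp only [Function.onFun]
      rw [Finset.disjoint_left]
      intro A hAa hAb
      rw [hSatdef] at hAa hAb
      have h1 := (Finset.mem_powersetCard.1 (Finset.mem_of_mem_filter _ hAa)).2
      have h2 := (Finset.mem_powersetCard.1 (Finset.mem_of_mem_filter _ hAb)).2
      exact hab (by omega)
    rw [hSatAlldef, Finset.sum_biUnion hdisj]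
    have hperℓ : ∀ ℓ ∈ Finset.Icc 2 (k-1), ∑ A ∈ Sat ℓ, (cfun A : ℝ)
        ≤ (2 * (((k-1).choose (ℓ-1)) : ℝ)) * δ * L := by
      intro ℓ hℓ
      rw [Finset.mem_Icc] at hℓ
      have hSatprop : ∀ A ∈ Sat ℓ, A ⊆ sub ∧ A.card = ℓ ∧ FinChain A ∧ A.Nonempty
          ∧ ((δ*m)^(k-ℓ) < (dg A:ℝ)+1) := by
        intro A hA
        rw [hSatdef, Finset.mem_filter, Finset.mem_powersetCard] at hA
        exact ⟨hA.1.1, hA.1.2, hA.2.1, by rw [← Finset.card_pos, hA.1.2]; omega, hA.2.2⟩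
      have hmapsto : ∀ A ∈ Sat ℓ, topOf A ∈ sub := by
        intro A hA
        have h := hSatprop A hA
        exact h.1 ((htopOf_spec A h.2.2.1 h.2.2.2.1).1)
      rw [← Finset.sum_fiberwise_of_maps_to hmapsto (fun A => (cfun A : ℝ))]
      have hinner : ∀ v ∈ sub, ∑ A ∈ (Sat ℓ).filter (fun A => topOf A = v), (cfun A:ℝ)
          ≤ (2 * (((k-1).choose (ℓ-1)) : ℝ)) * δ * (cnt v:ℝ) := by
        intro v hv
        set fib := (Sat ℓ).filter (fun A => topOf A = v) with hfibd
        have hvA : ∀ A ∈ fib, v ∈ A := by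
          intro A hA
          rw [hfibd, Finset.mem_filter] at hA
          have h := hSatprop A hA.1
          have hmem := (htopOf_spec A h.2.2.1 h.2.2.2.1).1
          rwa [hA.2] at hmem
        have hdgv : dg {v} = (H.filter (fun e => v ∈ e)).card := by
          show (H.filter (fun e => {v} ⊆ e)).card = (H.filter (fun e => v ∈ e)).card
          congr 1
          apply Finset.filter_congr
          intro e _
          simp [Finset.singleton_subset_iff]
        have hupper : ∑ A ∈ fib, dg A ≤ ((k-1).choose (ℓ-1)) * dg {v} := by
          have h1 : ∑ A ∈ fib, dg A = ∑ e ∈ H, (fib.filter (fun A => A ⊆ e)).card := by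
            show ∑ A ∈ fib, (H.filter (fun e => A ⊆ e)).card = _
            simp only [Finset.card_filter]
            rw [Finset.sum_comm]
          rw [h1]
          have h2 : ∀ e ∈ H, (fib.filter (fun A => A ⊆ e)).card
              ≤ if v ∈ e then ((k-1).choose (ℓ-1)) else 0 := by
            intro e he
            by_cases hve : v ∈ e
            · rw [if_pos hve]
              have hinto : ∀ A ∈ fib.filter (fun A => A ⊆ e),
                  A.erase v ∈ Finset.powersetCard (ℓ-1) (e.erase v) := by
                intro A hA
                rw [Finset.mem_filter] at hA
                rw [Finset.mem_powersetCard]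
                constructor
                · exact Finset.erase_subset_erase v hA.2
                · rw [Finset.card_erase_of_mem (hvA A hA.1), (hSatprop A (Finset.mem_of_mem_filter _ hA.1)).2.1]
              have hinj2 : Set.InjOn (fun A : Finset (Finset (Fin n)) => A.erase v)
                  (↑(fib.filter (fun A => A ⊆ e)) : Set (Finset (Finset (Fin n)))) := by
                intro A₁ h₁ A₂ h₂ heq
                rw [Finset.mem_coe, Finset.mem_filter] at h₁ h₂
                have e1 : insert v (A₁.erase v) = A₁ := Finset.insert_erase (hvA A₁ h₁.1)
                have e2 : insert v (A₂.erase v) = A₂ := Finset.insert_erase (hvA A₂ h₂.1)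
                rw [← e1, ← e2]
                simp only at heq
                rw [heq]
              have hcardle := Finset.card_le_card_of_injOn _ hinto hinj2
              rwa [Finset.card_powersetCard, Finset.card_erase_of_mem hve, (hH e he).2.1] at hcardle
            · rw [if_neg hve]
              have : fib.filter (fun A => A ⊆ e) = ∅ := by
                rw [Finset.eq_empty_iff_forall_notMem]
                intro A hA
                rw [Finset.mem_filter] at hA
                exact hve (hA.2 (hvA A hA.1))
              rw [this]
              simp
          calc ∑ e ∈ H, (fib.filter (fun A => A ⊆ e)).card
              ≤ ∑ e ∈ H, if v ∈ e then ((k-1).choose (ℓ-1)) else 0 := Finset.sum_le_sum h2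
            _ = ∑ e ∈ H.filter (fun e => v ∈ e), ((k-1).choose (ℓ-1)) :=
                (Finset.sum_filter _ _).symm
            _ = ((k-1).choose (ℓ-1)) * dg {v} := by
                rw [Finset.sum_const, smul_eq_mul, hdgv, mul_comm]
        have hlow : ∀ A ∈ fib, ((δ*m)^(k-ℓ))/2 ≤ (dg A : ℝ) := by
          intro A hA
          rw [hfibd, Finset.mem_filter] at hA
          exact halve _ _ (hδmpow _) (hSatprop A hA.1).2.2.2.2
        have hfibcard : (fib.card : ℝ) * ((δ*m)^(k-ℓ)/2)
            ≤ (((k-1).choose (ℓ-1)) : ℝ) * (δ*m)^(k-1) := by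
          calc (fib.card:ℝ) * ((δ*m)^(k-ℓ)/2) = ∑ _A ∈ fib, ((δ*m)^(k-ℓ)/2) := by
                rw [Finset.sum_const, nsmul_eq_mul]
            _ ≤ ∑ A ∈ fib, (dg A : ℝ) := Finset.sum_le_sum hlow
            _ = ((∑ A ∈ fib, dg A : ℕ) : ℝ) := by push_cast; rfl
            _ ≤ ((((k-1).choose (ℓ-1)) * dg {v} : ℕ) : ℝ) := by exact_mod_cast hupper
            _ = (((k-1).choose (ℓ-1)) : ℝ) * (dg {v} : ℝ) := by push_cast; ring
            _ ≤ (((k-1).choose (ℓ-1)) : ℝ) * (δ*m)^(k-1) :=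
                mul_le_mul_of_nonneg_left (hsubdeg v hv) (Nat.cast_nonneg _)
        have hfibcard2 : (fib.card : ℝ) ≤ 2*(((k-1).choose (ℓ-1)):ℝ) * (δ*m)^(ℓ-1) := by
          have hpow : (δ*m)^(k-1) = (δ*m)^(k-ℓ) * (δ*m)^(ℓ-1) := by
            rw [← pow_add]
            congr 1
            omega
          have hx : (0:ℝ) < (δ*m)^(k-ℓ)/2 := by positivity
          apply le_of_mul_le_mul_right _ hx
          calc (fib.card:ℝ) * ((δ*m)^(k-ℓ)/2) ≤ (((k-1).choose (ℓ-1)):ℝ)*(δ*m)^(k-1) :=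
                hfibcard
            _ = (2*(((k-1).choose (ℓ-1)):ℝ)*(δ*m)^(ℓ-1))*((δ*m)^(k-ℓ)/2) := by
                rw [hpow]; ring
        have hperA : ∀ A ∈ fib, (cfun A : ℝ) ≤ (cnt v:ℝ)/m^(ℓ-1) := by
          intro A hA
          rw [hfibd, Finset.mem_filter] at hA
          obtain ⟨hsubA, hcardA, hchA, hneA, -⟩ := hSatprop A hA.1
          have h := hN2' A (hsubA.trans hsub𝓕) hchA hneA
          rw [hcardA, hA.2] at h
          exact h
        calc ∑ A ∈ fib, (cfun A:ℝ) ≤ ∑ _A ∈ fib, (cnt v:ℝ)/m^(ℓ-1) :=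
              Finset.sum_le_sum hperA
          _ = (fib.card : ℝ) * ((cnt v:ℝ)/m^(ℓ-1)) := by
              rw [Finset.sum_const, nsmul_eq_mul]
          _ ≤ (2*(((k-1).choose (ℓ-1)):ℝ) * (δ*m)^(ℓ-1)) * ((cnt v:ℝ)/m^(ℓ-1)) :=
              mul_le_mul_of_nonneg_right hfibcard2 (by positivity)
          _ = (2*(((k-1).choose (ℓ-1)):ℝ)) * δ^(ℓ-1) * (cnt v:ℝ) := by
              rw [mul_pow]
              field_simp
          _ ≤ (2*(((k-1).choose (ℓ-1)):ℝ)) * δ * (cnt v:ℝ) := by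
              apply mul_le_mul_of_nonneg_right _ (Nat.cast_nonneg _)
              apply mul_le_mul_of_nonneg_left (hδpow (ℓ-1) (by omega)) (by positivity)
      calc ∑ v ∈ sub, ∑ A ∈ (Sat ℓ).filter (fun A => topOf A = v), (cfun A:ℝ)
          ≤ ∑ v ∈ sub, (2 * (((k-1).choose (ℓ-1)) : ℝ)) * δ * (cnt v:ℝ) :=
            Finset.sum_le_sum hinner
        _ = (2 * (((k-1).choose (ℓ-1)) : ℝ)) * δ * L := by
            rw [hLdef, Finset.mul_sum]
    have hchle : ∀ ℓ ∈ Finset.Icc 2 (k-1), (((k-1).choose (ℓ-1)) : ℝ) ≤ 2^(k-1) := by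
      intro ℓ hℓ
      rw [Finset.mem_Icc] at hℓ
      have h1 : (k-1).choose (ℓ-1) ≤ 2^(k-1) := by
        calc (k-1).choose (ℓ-1) ≤ ∑ i ∈ Finset.range ((k-1)+1), (k-1).choose i :=
              Finset.single_le_sum (fun i _ => Nat.zero_le _) (Finset.mem_range.2 (by omega))
          _ = 2^(k-1) := Nat.sum_range_choose (k-1)
      exact_mod_cast h1
    have hLnn2 : (0:ℝ) ≤ δ * L := by positivity
    calc ∑ ℓ ∈ Finset.Icc 2 (k-1), ∑ A ∈ Sat ℓ, (cfun A : ℝ)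
        ≤ ∑ ℓ ∈ Finset.Icc 2 (k-1), (2 * (((k-1).choose (ℓ-1)) : ℝ)) * δ * L :=
          Finset.sum_le_sum hperℓ
      _ ≤ ∑ _ℓ ∈ Finset.Icc 2 (k-1), (2 * (2:ℝ)^(k-1)) * δ * L := by
          apply Finset.sum_le_sum
          intro ℓ hℓ
          have := hchle ℓ hℓ
          have h2 : (2 * (((k-1).choose (ℓ-1)) : ℝ)) ≤ 2 * (2:ℝ)^(k-1) := by linarith
          apply mul_le_mul_of_nonneg_right _ hLnn
          apply mul_le_mul_of_nonneg_right h2 (le_of_lt hδpos)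
      _ = ((Finset.Icc 2 (k-1)).card : ℝ) * ((2 * (2:ℝ)^(k-1)) * δ * L) := by
          rw [Finset.sum_const, nsmul_eq_mul]
      _ ≤ ((k:ℝ) * 2^k) * δ * L := by
          have hc : ((Finset.Icc 2 (k-1)).card : ℝ) ≤ (k:ℝ) := by
            rw [Nat.card_Icc]
            have : (k - 1 + 1 - 2 : ℕ) ≤ k := by omega
            exact_mod_cast this
          have h2pow : 2 * (2:ℝ)^(k-1) = 2^k := by
            rw [← pow_succ']
            congr 1
            omega
          rw [h2pow]
          have h3 : (0:ℝ) ≤ (2:ℝ)^k * (δ * L) := by positivity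
          calc ((Finset.Icc 2 (k-1)).card : ℝ) * ((2:ℝ)^k * δ * L)
              = ((Finset.Icc 2 (k-1)).card : ℝ) * ((2:ℝ)^k * (δ * L)) := by ring
            _ ≤ (k:ℝ) * ((2:ℝ)^k * (δ * L)) := mul_le_mul_of_nonneg_right hc h3
            _ = ((k:ℝ) * 2^k) * δ * L := by ring
  have hLlow : ((k:ℝ) - 1 + α'/2) * (n.factorial : ℝ) ≤ L := by
    have hN0 : (0:ℝ) < (N:ℝ) := by exact_mod_cast hNpos
    have hcntN : ∀ v : Finset (Fin n), (n.factorial : ℝ) ≤ (cnt v : ℝ) * N := by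
      intro v
      have h1 := cnt_mul_choose (n := n) v
      have h2 : (n.choose v.card : ℝ) ≤ (N:ℝ) := by exact_mod_cast Nat.choose_le_middle _ _
      calc (n.factorial : ℝ) = (cnt v : ℝ) * (n.choose v.card : ℝ) := by exact_mod_cast h1.symm
        _ ≤ (cnt v : ℝ) * N := mul_le_mul_of_nonneg_left h2 (Nat.cast_nonneg _)
    have h3 : (sub.card : ℝ) * (n.factorial:ℝ) ≤ L * N := by
      calc (sub.card:ℝ)*(n.factorial:ℝ) = ∑ _v ∈ sub, (n.factorial:ℝ) := by
            rw [Finset.sum_const, nsmul_eq_mul]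
        _ ≤ ∑ v ∈ sub, (cnt v:ℝ)*N := Finset.sum_le_sum (fun v _ => hcntN v)
        _ = L * N := by rw [hLdef, Finset.sum_mul]
    have hfac0 : (0:ℝ) ≤ (n.factorial : ℝ) := Nat.cast_nonneg _
    have h4 : (((k:ℝ) - 1 + α'/2) * (n.factorial:ℝ)) * N ≤ (L * N) := by
      calc (((k:ℝ) - 1 + α'/2) * (n.factorial:ℝ)) * N
          = (((k:ℝ) - 1 + α'/2) * N) * (n.factorial:ℝ) := by ring
        _ ≤ (sub.card : ℝ) * (n.factorial:ℝ) := mul_le_mul_of_nonneg_right hsubcard hfac0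
        _ ≤ L * N := h3
    exact le_of_mul_le_mul_right h4 hN0
  -- assemble
  have hLnonneg : ∀ v ∈ sub, (0:ℝ) ≤ (cnt v : ℝ) := fun v _ => Nat.cast_nonneg _
  have hLpos : 0 < L := by
    have hfac : (0:ℝ) < (n.factorial : ℝ) := by exact_mod_cast (Nat.factorial_pos n)
    nlinarith [hLlow]
  have hmain : L ≤ ((k:ℝ)-1) * (n.factorial : ℝ) + δ * L + (k:ℝ) * (((k:ℝ) * 2^k) * δ * L) := by
    have h1 : ∀ σ : Equiv.Perm (Fin n),
        ((sub.filter (fun F => pref σ F)).card : ℝ) ≤ ((k:ℝ)-1)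
          + ((H.filter (fun e => e ⊆ sub ∧ AP σ e)).card : ℝ)
          + (k:ℝ) * ((SatAll.filter (fun A => AP σ A)).card : ℝ) := by
      intro σ
      have := master σ
      have hcast : ((sub.filter (fun F => pref σ F)).card : ℝ)
          ≤ (((k-1) + (H.filter (fun e => e ⊆ sub ∧ AP σ e)).card
            + k * (SatAll.filter (fun A => AP σ A)).card : ℕ) : ℝ) := by
        exact_mod_cast this
      push_cast at hcast
      have hk1 : ((k-1 : ℕ) : ℝ) = (k:ℝ) - 1 := by
        have : 1 ≤ k := by omega
        push_cast [this]
        ring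
      rw [hk1] at hcast
      linarith
    have h3 : ∑ _σ : Equiv.Perm (Fin n), ((k:ℝ)-1) = ((k:ℝ)-1) * (n.factorial : ℝ) := by
      rw [Finset.sum_const, Finset.card_univ, Fintype.card_perm, Fintype.card_fin, nsmul_eq_mul,
        mul_comm]
    calc L = ∑ σ : Equiv.Perm (Fin n), ((sub.filter (fun F => pref σ F)).card : ℝ) := hLsum.symm
      _ ≤ ∑ σ : Equiv.Perm (Fin n), (((k:ℝ)-1)
            + ((H.filter (fun e => e ⊆ sub ∧ AP σ e)).card : ℝ)
            + (k:ℝ) * ((SatAll.filter (fun A => AP σ A)).card : ℝ)) :=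
        Finset.sum_le_sum (fun σ _ => h1 σ)
      _ = ((k:ℝ)-1) * (n.factorial : ℝ)
            + (∑ σ : Equiv.Perm (Fin n), ((H.filter (fun e => e ⊆ sub ∧ AP σ e)).card : ℝ))
            + (k:ℝ) * ∑ σ : Equiv.Perm (Fin n), ((SatAll.filter (fun A => AP σ A)).card : ℝ) := by
          rw [Finset.sum_add_distrib, Finset.sum_add_distrib, h3, Finset.mul_sum]
      _ = ((k:ℝ)-1) * (n.factorial : ℝ)
            + (∑ e ∈ H.filter (fun e => e ⊆ sub), (cfun e : ℝ))
            + (k:ℝ) * ∑ A ∈ SatAll, (cfun A : ℝ) := by rw [hEsum, hSsum]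
      _ ≤ ((k:ℝ)-1) * (n.factorial : ℝ) + δ * L + (k:ℝ) * (((k:ℝ) * 2^k) * δ * L) := by
          have hS' := mul_le_mul_of_nonneg_left hSatbound (le_of_lt hkpos)
          exact add_le_add (add_le_add le_rfl hEbound) hS'
  -- final numeric contradiction
  set β : ℝ := (k:ℝ) - 1 + α'/2 with hβdef
  have hβk : β ≤ (k:ℝ) := by rw [hβdef]; linarith
  have hβpos : 0 < β := by rw [hβdef]; linarith
  have hstep : β * L ≤ ((k:ℝ)-1) * L + β * (δ*(1 + (k:ℝ)^2*2^k)) * L := by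
    have h5 : β * (((k:ℝ)-1) * (n.factorial : ℝ)) ≤ ((k:ℝ)-1) * L := by
      have := mul_le_mul_of_nonneg_left hLlow (by linarith : (0:ℝ) ≤ (k:ℝ)-1)
      calc β * (((k:ℝ)-1) * (n.factorial : ℝ)) = ((k:ℝ)-1) * (β * (n.factorial : ℝ)) := by ring
        _ ≤ ((k:ℝ)-1) * L := this
    have h6 : δ * L + (k:ℝ) * (((k:ℝ) * 2^k) * δ * L) = (δ*(1 + (k:ℝ)^2*2^k)) * L := by ring
    have h7 := mul_le_mul_of_nonneg_left hmain (le_of_lt hβpos)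
    calc β * L ≤ β * (((k:ℝ)-1) * (n.factorial:ℝ) + δ * L + (k:ℝ) * (((k:ℝ) * 2^k) * δ * L)) := h7
      _ = β * (((k:ℝ)-1) * (n.factorial:ℝ)) + β * ((δ*(1 + (k:ℝ)^2*2^k)) * L) := by rw [← h6]; ring
      _ ≤ ((k:ℝ)-1) * L + β * (δ*(1 + (k:ℝ)^2*2^k)) * L := by linarith
  have hfin : α'/2 * L ≤ α'/8 * L := by
    have h8 : β * (δ*(1 + (k:ℝ)^2*2^k)) ≤ (k:ℝ) * (α'/(8*k)) := by
      apply mul_le_mul hβk hCtot (by positivity) (by linarith)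
    have h9 : (k:ℝ) * (α'/(8*k)) = α'/8 := by field_simp
    have h10 : (β - ((k:ℝ)-1)) * L ≤ (β * (δ*(1 + (k:ℝ)^2*2^k))) * L := by linarith
    have h11 : β - ((k:ℝ)-1) = α'/2 := by rw [hβdef]; ring
    calc α'/2 * L = (β - ((k:ℝ)-1)) * L := by rw [h11]
      _ ≤ (β * (δ*(1 + (k:ℝ)^2*2^k))) * L := h10
      _ ≤ ((k:ℝ) * (α'/(8*k))) * L := mul_le_mul_of_nonneg_right (by linarith [h8]) (le_of_lt hLpos)
      _ = α'/8 * L := by rw [h9]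
  nlinarith [hfin, hLpos, hα'pos]
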